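/- For any tree H, the set Θ(H) of integers t for which H admits a cyclically-interval t-coloring equals the integer interval [Δ(H), M(H)], where Δ(H) is the maximum degree. -/

import Mathlib

open SimpleGraph

/-- `Q` is a `t`-cyclic interval. -/
def IsCyclicInterval (t : ℕ) (Q : Set ℕ) : Prop :=
  ∃ i₁ ∈ Set.Icc 1 t, ∃ i₂ ∈ Set.Icc 1 t,
    Q = Set.Icc (min i₁ i₂) (max i₁ i₂) ∨
    Q = Set.Icc 1 t \ (Set.Icc (min i₁ i₂) (max i₁ i₂) \ {i₁, i₂})

/-- A proper edge `t`-coloring: colors in `[1,t]`, adjacent edges differ, all colors used. -/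
def IsProperEdgeColoring {V : Type*} (G : SimpleGraph V) (t : ℕ) (φ : Sym2 V → ℕ) : Prop :=
  (∀ e ∈ G.edgeSet, φ e ∈ Set.Icc 1 t) ∧
  (∀ e₁ ∈ G.edgeSet, ∀ e₂ ∈ G.edgeSet, e₁ ≠ e₂ → (∃ x, x ∈ e₁ ∧ x ∈ e₂) → φ e₁ ≠ φ e₂) ∧
  (∀ c ∈ Set.Icc 1 t, ∃ e ∈ G.edgeSet, φ e = c)

/-- A cyclically-interval `t`-coloring. -/
def IsCyclicIntervalColoring {V : Type*} (G : SimpleGraph V) (t : ℕ) (φ : Sym2 V → ℕ) : Prop :=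
  IsProperEdgeColoring G t φ ∧
  ∀ x : V, (G.incidenceSet x).Nonempty → IsCyclicInterval t (φ '' G.incidenceSet x)

/-- An interval `t`-coloring. -/
def IsIntervalColoring {V : Type*} (G : SimpleGraph V) (t : ℕ) (φ : Sym2 V → ℕ) : Prop :=
  IsProperEdgeColoring G t φ ∧
  ∀ x : V, (G.incidenceSet x).Nonempty → ∃ a b, φ '' G.incidenceSet x = Set.Icc a b

/-- `TP(u,v)` along a path `p`. -/
def pathTP {V : Type*} (G : SimpleGraph V) {u v : V} (p : G.Walk u v) : Set (Sym2 V) :=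
  if p.length ≤ 1 then {e | e ∈ p.edges}
  else ⋃ x ∈ {w | w ∈ p.support ∧ w ≠ u ∧ w ≠ v}, G.incidenceSet x

/-- `M(H)`: maximum of `|TP(b_i,b_j)|` over pairs of vertices. -/
noncomputable def treeM {V : Type*} (G : SimpleGraph V) : ℕ :=
  sSup {n | ∃ (u v : V) (p : G.Walk u v), p.IsPath ∧ (pathTP G p).ncard = n}

noncomputable def Wcyc {V : Type*} (G : SimpleGraph V) : ℕ :=
  sSup {t | ∃ φ, IsCyclicIntervalColoring G t φ}

noncomputable def wcyc {V : Type*} (G : SimpleGraph V) : ℕ :=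
  sInf {t | ∃ φ, IsCyclicIntervalColoring G t φ}

noncomputable def Wint {V : Type*} (G : SimpleGraph V) : ℕ :=
  sSup {t | ∃ φ, IsIntervalColoring G t φ}

noncomputable def wint {V : Type*} (G : SimpleGraph V) : ℕ :=
  sInf {t | ∃ φ, IsIntervalColoring G t φ}

/-- Chromatic index: least `n` admitting a proper edge coloring with colors in `[1,n]`. -/
noncomputable def chromIndex {V : Type*} (G : SimpleGraph V) : ℕ :=
  sInf {n | ∃ φ : Sym2 V → ℕ, (∀ e ∈ G.edgeSet, φ e ∈ Set.Icc 1 n) ∧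
    (∀ e₁ ∈ G.edgeSet, ∀ e₂ ∈ G.edgeSet, e₁ ≠ e₂ → (∃ x, x ∈ e₁ ∧ x ∈ e₂) → φ e₁ ≠ φ e₂)}



namespace Stmt7Aux

lemma add_mod_mod (a j t : ℕ) : (a + j % t) % t = (a + j) % t := by
  obtain ⟨k, hk⟩ : ∃ k, j = t * k + j % t := ⟨j / t, (Nat.div_add_mod j t).symm⟩
  rw [show a + j = (a + j % t) + t * k from by omega, Nat.add_mul_mod_self_left]

lemma mod_add_mod' (a j t : ℕ) : (a % t + j) % t = (a + j) % t := by
  rw [Nat.add_comm (a % t) j, add_mod_mod, Nat.add_comm]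

/-- Values of `%` on `[0, 2t)`. -/
lemma mod2 {t : ℕ} (y : ℕ) (ht : 0 < t) (h : y < 2 * t) :
    (y % t = y ∧ y < t) ∨ (y % t = y - t ∧ t ≤ y) := by
  rcases lt_or_ge y t with h' | h'
  · exact Or.inl ⟨Nat.mod_eq_of_lt h', h'⟩
  · exact Or.inr ⟨by rw [Nat.mod_eq_sub_mod h', Nat.mod_eq_of_lt (by omega)], h'⟩

def elt (t a j : ℕ) : ℕ := 1 + (a + j) % t
def off (t a c : ℕ) : ℕ := (c - 1 + (t - a % t)) % t
def arcSet (t a l : ℕ) : Set ℕ := elt t a '' Set.Iio l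

lemma elt_one_le (t a j : ℕ) : 1 ≤ elt t a j := Nat.le_add_right _ _

lemma elt_le {t : ℕ} (ht : 0 < t) (a j : ℕ) : elt t a j ≤ t := by
  have := Nat.mod_lt (a + j) ht; unfold elt; omega

lemma elt_mod_right (t a j : ℕ) : elt t a (j % t) = elt t a j := by
  unfold elt; rw [add_mod_mod]

lemma elt_mod_left (t a j : ℕ) : elt t (a % t) j = elt t a j := by
  unfold elt; rw [mod_add_mod']

lemma elt_add (t a i j : ℕ) : elt t (a + i) j = elt t a (i + j) := by
  unfold elt; rw [Nat.add_assoc]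

lemma elt_congr {t a b : ℕ} (j : ℕ) (h : a % t = b % t) : elt t a j = elt t b j := by
  rw [← elt_mod_left t a, h, elt_mod_left]

lemma off_lt {t : ℕ} (ht : 0 < t) (a c : ℕ) : off t a c < t := Nat.mod_lt _ ht

lemma off_congr {t a b : ℕ} (c : ℕ) (h : a % t = b % t) : off t a c = off t b c := by
  unfold off; rw [h]

lemma elt_off {t : ℕ} (ht : 0 < t) {c : ℕ} (a : ℕ) (h1 : 1 ≤ c) (h2 : c ≤ t) :
    elt t a (off t a c) = c := by
  unfold off
  rw [elt_mod_right]
  unfold elt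
  obtain ⟨k, hk⟩ : ∃ k, a = t * k + a % t := ⟨a / t, (Nat.div_add_mod a t).symm⟩
  have h3 : a % t < t := Nat.mod_lt _ ht
  rw [show a + (c - 1 + (t - a % t)) = ((c - 1) + t * k) + t from by omega,
    Nat.add_mod_right, Nat.add_mul_mod_self_left, Nat.mod_eq_of_lt (by omega)]
  omega

lemma elt_injOn {t : ℕ} (ht : 0 < t) (a : ℕ) {x y : ℕ} (hx : x < t) (hy : y < t)
    (h : elt t a x = elt t a y) : x = y := by
  unfold elt at h
  rw [← mod_add_mod' a x, ← mod_add_mod' a y] at h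
  have h3 : a % t < t := Nat.mod_lt _ ht
  rcases mod2 (a % t + x) ht (by omega) with ⟨h4, h5⟩ | ⟨h4, h5⟩ <;>
    rcases mod2 (a % t + y) ht (by omega) with ⟨h6, h7⟩ | ⟨h6, h7⟩ <;> omega

lemma off_elt {t : ℕ} (ht : 0 < t) (a j : ℕ) : off t a (elt t a j) = j % t := by
  refine elt_injOn ht a (off_lt ht _ _) (Nat.mod_lt _ ht) ?_
  rw [elt_mod_right, elt_off ht a (elt_one_le t a j) (elt_le ht a j)]

lemma mem_arcSet {t : ℕ} (ht : 0 < t) {a l c : ℕ} (hl : l ≤ t) :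
    c ∈ arcSet t a l ↔ 1 ≤ c ∧ c ≤ t ∧ off t a c < l := by
  constructor
  · rintro ⟨j, hj, rfl⟩
    refine ⟨elt_one_le t a j, elt_le ht a j, ?_⟩
    rw [off_elt ht]
    exact lt_of_le_of_lt (Nat.mod_le j t) hj
  · rintro ⟨h1, h2, h3⟩
    exact ⟨off t a c, h3, elt_off ht a h1 h2⟩

lemma arcSet_subset {t : ℕ} (ht : 0 < t) (a l : ℕ) : arcSet t a l ⊆ Set.Icc 1 t := by
  rintro c ⟨j, hj, rfl⟩
  exact ⟨elt_one_le t a j, elt_le ht a j⟩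

lemma arcSet_finite (t a l : ℕ) : (arcSet t a l).Finite :=
  (Set.finite_Iio l).image _

lemma arcSet_mono (t a : ℕ) {l l' : ℕ} (h : l ≤ l') : arcSet t a l ⊆ arcSet t a l' :=
  Set.image_mono (fun x hx => lt_of_lt_of_le hx h)

lemma arcSet_full {t : ℕ} (ht : 0 < t) (a : ℕ) : arcSet t a t = Set.Icc 1 t := by
  refine subset_antisymm (arcSet_subset ht a t) ?_
  rintro c ⟨h1, h2⟩
  exact ⟨off t a c, off_lt ht a c, elt_off ht a h1 h2⟩

lemma arcSet_congr {t a b : ℕ} (l : ℕ) (h : a % t = b % t) : arcSet t a l = arcSet t b l := by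
  unfold arcSet
  rw [show elt t a = elt t b from funext fun j => elt_congr j h]

lemma ncard_arcSet {t : ℕ} (ht : 0 < t) {a l : ℕ} (hl : l ≤ t) : (arcSet t a l).ncard = l := by
  unfold arcSet
  have h2 : (Set.Iio l).ncard = l := by
    rw [← Finset.coe_range, Set.ncard_coe_finset, Finset.card_range]
  refine (Set.ncard_image_of_injOn ?_).trans h2
  intro x hx y hy hxy
  exact elt_injOn ht a (lt_of_lt_of_le hx hl) (lt_of_lt_of_le hy hl) hxy

def IsArc (t : ℕ) (S : Set ℕ) : Prop := ∃ a l, l ≤ t ∧ S = arcSet t a l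

lemma IsArc.finite {t : ℕ} {S : Set ℕ} (h : IsArc t S) : S.Finite := by
  obtain ⟨a, l, _, rfl⟩ := h; exact arcSet_finite t a l

lemma IsArc.subset_Icc {t : ℕ} (ht : 0 < t) {S : Set ℕ} (h : IsArc t S) : S ⊆ Set.Icc 1 t := by
  obtain ⟨a, l, _, rfl⟩ := h; exact arcSet_subset ht a _

/-- extended shift lemma for `off`. -/
lemma off_shift {t : ℕ} (ht : 0 < t) {s c : ℕ} (a : ℕ) (hst : s ≤ t) (h1 : 1 ≤ c) (h2 : c ≤ t) :
    off t (a + s) c = (off t a c + (t - s)) % t := by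
  rcases eq_or_lt_of_le hst with hst' | hst'
  · subst hst'
    rw [off_congr c (Nat.add_mod_right a s), Nat.sub_self, Nat.add_zero,
      Nat.mod_eq_of_lt (off_lt ht a c)]
  · refine elt_injOn ht (a + s) (off_lt ht _ _) (Nat.mod_lt _ ht) ?_
    rw [elt_off ht _ h1 h2, elt_mod_right, elt_add,
      show s + (off t a c + (t - s)) = off t a c + t from by omega, ← elt_mod_right,
      Nat.add_mod_right, Nat.mod_eq_of_lt (off_lt ht a c), elt_off ht a h1 h2]

lemma union_arc_aux {t a b la lb : ℕ} (ht : 0 < t) (hla : la ≤ t) (hlb : lb ≤ t)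
    (hs : off t a (elt t b 0) < la) :
    arcSet t a la ∪ arcSet t b lb
      = arcSet t a (max la (min (off t a (elt t b 0) + lb) t)) := by
  set s := off t a (elt t b 0) with hsdef
  have hst : s < t := off_lt ht _ _
  have hrebase : arcSet t b lb = arcSet t (a + s) lb := by
    refine arcSet_congr lb ?_
    have h1 : elt t a s = elt t b 0 := elt_off ht a (elt_one_le _ _ _) (elt_le ht _ _)
    unfold elt at h1
    rw [Nat.add_zero] at h1
    omega
  have hmax : max la (min (s + lb) t) ≤ t := by omega
  ext c
  by_cases hc : 1 ≤ c ∧ c ≤ t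
  case neg =>
    rw [hrebase]
    simp only [Set.mem_union, mem_arcSet ht hla, mem_arcSet ht hlb, mem_arcSet ht hmax]
    constructor
    · rintro (⟨h1, h2, -⟩ | ⟨h1, h2, -⟩) <;> exact absurd ⟨h1, h2⟩ hc
    · rintro ⟨h1, h2, -⟩; exact absurd ⟨h1, h2⟩ hc
  case pos =>
    obtain ⟨hc1, hc2⟩ := hc
    rw [hrebase]
    simp only [Set.mem_union, mem_arcSet ht hla, mem_arcSet ht hlb, mem_arcSet ht hmax]
    have hoff : off t (a + s) c = (off t a c + (t - s)) % t :=
      off_shift ht a (le_of_lt hst) hc1 hc2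
    have hx : off t a c < t := off_lt ht a c
    rcases mod2 (off t a c + (t - s)) ht (by omega) with ⟨h4, h5⟩ | ⟨h4, h5⟩ <;> omega

lemma IsArc.union {t : ℕ} (ht : 0 < t) {A B : Set ℕ} (hA : IsArc t A) (hB : IsArc t B)
    (hne : (A ∩ B).Nonempty) : IsArc t (A ∪ B) := by
  obtain ⟨a, la, hla, rfl⟩ := hA
  obtain ⟨b, lb, hlb, rfl⟩ := hB
  obtain ⟨c, hcA, hcB⟩ := hne
  rw [mem_arcSet ht hla] at hcA
  rw [mem_arcSet ht hlb] at hcB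
  obtain ⟨hc1, hc2, hi⟩ := hcA
  obtain ⟨-, -, hj⟩ := hcB
  have hkey : off t a (elt t b 0) < la ∨ off t b (elt t a 0) < lb := by
    have ra : a % t < t := Nat.mod_lt _ ht
    have rb : b % t < t := Nat.mod_lt _ ht
    have e1 : off t a c = (c - 1 + (t - a % t)) % t := rfl
    have e2 : off t b c = (c - 1 + (t - b % t)) % t := rfl
    have e3 : off t a (elt t b 0) = (b % t + (t - a % t)) % t := by
      show (1 + (b + 0) % t - 1 + (t - a % t)) % t = _
      rw [Nat.add_zero]
      congr 1
      omega
    have e4 : off t b (elt t a 0) = (a % t + (t - b % t)) % t := by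
      show (1 + (a + 0) % t - 1 + (t - b % t)) % t = _
      rw [Nat.add_zero]
      congr 1
      omega
    rcases mod2 (c - 1 + (t - a % t)) ht (by omega) with h1 | h1 <;>
      rcases mod2 (c - 1 + (t - b % t)) ht (by omega) with h2 | h2 <;>
        rcases mod2 (b % t + (t - a % t)) ht (by omega) with h3 | h3 <;>
          rcases mod2 (a % t + (t - b % t)) ht (by omega) with h4 | h4 <;> omega
  rcases hkey with hk | hk
  · exact ⟨a, _, by omega, union_arc_aux ht hla hlb hk⟩
  · rw [Set.union_comm]
    exact ⟨b, _, by omega, union_arc_aux ht hlb hla hk⟩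

lemma off_trans {t : ℕ} (ht : 0 < t) (a : ℕ) {p c : ℕ} (hp1 : 1 ≤ p) (hp2 : p ≤ t)
    (hc1 : 1 ≤ c) (hc2 : c ≤ t) :
    off t a c = (off t (p - 1) c + off t a p) % t := by
  refine elt_injOn ht a (off_lt ht _ _) (Nat.mod_lt _ ht) ?_
  rw [elt_off ht a hc1 hc2, elt_mod_right,
    show off t (p - 1) c + off t a p = off t a p + off t (p - 1) c from Nat.add_comm _ _,
    ← elt_add]
  have hbase : (a + off t a p) % t = (p - 1) % t := by
    have h1 : elt t a (off t a p) = p := elt_off ht a hp1 hp2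
    unfold elt at h1
    have h2 : (a + off t a p) % t = p - 1 := by omega
    rw [h2, Nat.mod_eq_of_lt (by omega)]
  rw [elt_congr _ hbase, elt_off ht _ hc1 hc2]

lemma mem_arc_coord {t : ℕ} (ht : 0 < t) {p : ℕ} (hp1 : 1 ≤ p) (hp2 : p ≤ t) {a l : ℕ}
    (hl : l ≤ t) {c : ℕ} (h1 : 1 ≤ c) (h2 : c ≤ t) :
    c ∈ arcSet t a l ↔ (off t (p - 1) c + off t a p) % t < l := by
  rw [mem_arcSet ht hl, ← off_trans ht a hp1 hp2 h1 h2]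
  exact ⟨fun h => h.2.2, fun h => ⟨h1, h2, h⟩⟩

section Key3

variable {t ax lx ay ly az lz p c₀ : ℕ}

lemma pair_subset (ht : 0 < t) (hlx : lx ≤ t) (hly : ly ≤ t)
    (hp1 : 1 ≤ p) (hp2 : p ≤ t)
    (hpX : p ∈ arcSet t ax lx) (hpY : p ∈ arcSet t ay ly)
    (hTlen : max (off t ax p) (off t ay p) +
      max (lx - 1 - off t ax p) (ly - 1 - off t ay p) + 1 ≤ t) :
    arcSet t ax lx ∪ arcSet t ay ly ⊆
      arcSet t ((p - 1) + (t - max (off t ax p) (off t ay p)))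
        (max (off t ax p) (off t ay p) +
          max (lx - 1 - off t ax p) (ly - 1 - off t ay p) + 1) := by
  have hbX : off t ax p < lx := ((mem_arcSet ht hlx).1 hpX).2.2
  have hbY : off t ay p < ly := ((mem_arcSet ht hly).1 hpY).2.2
  intro c hc'
  have hcb : 1 ≤ c ∧ c ≤ t := by
    rcases hc' with h | h
    · exact arcSet_subset ht ax lx h
    · exact arcSet_subset ht ay ly h
  rw [mem_arcSet ht hTlen]
  refine ⟨hcb.1, hcb.2, ?_⟩
  rw [off_shift ht (p - 1) (by omega) hcb.1 hcb.2,
    show t - (t - max (off t ax p) (off t ay p)) = max (off t ax p) (off t ay p) from by omega]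
  have hwt : off t (p - 1) c < t := off_lt ht _ _
  rcases mod2 (off t (p - 1) c + max (off t ax p) (off t ay p)) ht (by omega) with h2 | h2
  all_goals rcases hc' with h | h
  all_goals first
    | (rw [mem_arc_coord ht hp1 hp2 hlx hcb.1 hcb.2] at h
       rcases mod2 (off t (p - 1) c + off t ax p) ht (by omega) with h1 | h1 <;> omega)
    | (rw [mem_arc_coord ht hp1 hp2 hly hcb.1 hcb.2] at h
       rcases mod2 (off t (p - 1) c + off t ay p) ht (by omega) with h1 | h1 <;> omega)

lemma key3core1 (ht : 0 < t)
    (hlx : lx ≤ t) (hly : ly ≤ t) (hlz : lz ≤ t)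
    (hpX : p ∈ arcSet t ax lx) (hpY : p ∈ arcSet t ay ly) (hpZ : p ∈ arcSet t az lz)
    (hc : c₀ ∈ arcSet t az lz) (hcX : c₀ ∉ arcSet t ax lx) (hcY : c₀ ∉ arcSet t ay ly)
    (hba : off t ay p ≤ off t ax p)
    (hcase : off t (p - 1) c₀ + off t az p < t) :
    (arcSet t ax lx ∪ arcSet t ay ly).ncard < (arcSet t az lz ∪ arcSet t ax lx).ncard := by
  obtain ⟨hp1, hp2⟩ := arcSet_subset ht ax lx hpX
  obtain ⟨hc1, hc2⟩ := arcSet_subset ht az lz hc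
  have hbX : off t ax p < lx := ((mem_arcSet ht hlx).1 hpX).2.2
  have hbY : off t ay p < ly := ((mem_arcSet ht hly).1 hpY).2.2
  have hbZ : off t az p < lz := ((mem_arcSet ht hlz).1 hpZ).2.2
  have hgt : off t (p - 1) c₀ < t := off_lt ht _ _
  rw [mem_arc_coord ht hp1 hp2 hlx hc1 hc2] at hcX
  rw [mem_arc_coord ht hp1 hp2 hly hc1 hc2] at hcY
  rw [mem_arc_coord ht hp1 hp2 hlz hc1 hc2] at hc
  have hXf : off t (p - 1) c₀ + off t ax p < t ∧ lx ≤ off t (p - 1) c₀ + off t ax p := by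
    rcases mod2 (off t (p - 1) c₀ + off t ax p) ht (by omega) with h1 | h1 <;> omega
  have hYf : off t (p - 1) c₀ + off t ay p < t ∧ ly ≤ off t (p - 1) c₀ + off t ay p := by
    rcases mod2 (off t (p - 1) c₀ + off t ay p) ht (by omega) with h1 | h1 <;> omega
  have hZf : off t (p - 1) c₀ + off t az p < lz := by
    rcases mod2 (off t (p - 1) c₀ + off t az p) ht (by omega) with h1 | h1 <;> omega
  have hlen : off t ax p + off t (p - 1) c₀ + 1 ≤ t := by omega
  have hSsub : arcSet t ((p - 1) + (t - off t ax p)) (off t ax p + off t (p - 1) c₀ + 1) ⊆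
      arcSet t az lz ∪ arcSet t ax lx := by
    intro c hcS
    obtain ⟨hd1, hd2⟩ := arcSet_subset ht _ _ hcS
    rw [mem_arcSet ht hlen] at hcS
    have hcS' := hcS.2.2
    rw [off_shift ht (p - 1) (by omega) hd1 hd2,
      show t - (t - off t ax p) = off t ax p from by omega] at hcS'
    have hwt : off t (p - 1) c < t := off_lt ht _ _
    rcases mod2 (off t (p - 1) c + off t ax p) ht (by omega) with h1 | h1
    · left
      rw [mem_arc_coord ht hp1 hp2 hlz hd1 hd2]
      rcases mod2 (off t (p - 1) c + off t az p) ht (by omega) with h2 | h2 <;> omega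
    · right
      rw [mem_arc_coord ht hp1 hp2 hlx hd1 hd2]
      omega
  have hTlen : max (off t ax p) (off t ay p) +
      max (lx - 1 - off t ax p) (ly - 1 - off t ay p) + 1 ≤ t := by omega
  have h1 := Set.ncard_le_ncard
    (pair_subset ht hlx hly hp1 hp2 hpX hpY hTlen) (arcSet_finite _ _ _)
  have h2 := Set.ncard_le_ncard hSsub
    ((arcSet_finite _ _ _).union (arcSet_finite _ _ _))
  rw [ncard_arcSet ht hTlen] at h1
  rw [ncard_arcSet ht hlen] at h2
  omega

lemma key3core2 (ht : 0 < t)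
    (hlx : lx ≤ t) (hly : ly ≤ t) (hlz : lz ≤ t)
    (hpX : p ∈ arcSet t ax lx) (hpY : p ∈ arcSet t ay ly) (hpZ : p ∈ arcSet t az lz)
    (hc : c₀ ∈ arcSet t az lz) (hcX : c₀ ∉ arcSet t ax lx) (hcY : c₀ ∉ arcSet t ay ly)
    (hff : ly - 1 - off t ay p ≤ lx - 1 - off t ax p)
    (hcase : t ≤ off t (p - 1) c₀ + off t az p) :
    (arcSet t ax lx ∪ arcSet t ay ly).ncard < (arcSet t az lz ∪ arcSet t ax lx).ncard := by
  obtain ⟨hp1, hp2⟩ := arcSet_subset ht ax lx hpX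
  obtain ⟨hc1, hc2⟩ := arcSet_subset ht az lz hc
  have hbX : off t ax p < lx := ((mem_arcSet ht hlx).1 hpX).2.2
  have hbY : off t ay p < ly := ((mem_arcSet ht hly).1 hpY).2.2
  have hbZ : off t az p < lz := ((mem_arcSet ht hlz).1 hpZ).2.2
  have hgt : off t (p - 1) c₀ < t := off_lt ht _ _
  rw [mem_arc_coord ht hp1 hp2 hlx hc1 hc2] at hcX
  rw [mem_arc_coord ht hp1 hp2 hly hc1 hc2] at hcY
  have hXf : off t (p - 1) c₀ + off t ax p < t ∧ lx ≤ off t (p - 1) c₀ + off t ax p := by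
    rcases mod2 (off t (p - 1) c₀ + off t ax p) ht (by omega) with h1 | h1 <;> omega
  have hYf : off t (p - 1) c₀ + off t ay p < t ∧ ly ≤ off t (p - 1) c₀ + off t ay p := by
    rcases mod2 (off t (p - 1) c₀ + off t ay p) ht (by omega) with h1 | h1 <;> omega
  have hlen : (t - off t (p - 1) c₀) + (lx - 1 - off t ax p) + 1 ≤ t := by omega
  have hSsub : arcSet t ((p - 1) + off t (p - 1) c₀)
      ((t - off t (p - 1) c₀) + (lx - 1 - off t ax p) + 1) ⊆
      arcSet t az lz ∪ arcSet t ax lx := by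
    intro c hcS
    obtain ⟨hd1, hd2⟩ := arcSet_subset ht _ _ hcS
    rw [mem_arcSet ht hlen] at hcS
    have hcS' := hcS.2.2
    rw [off_shift ht (p - 1) (by omega) hd1 hd2] at hcS'
    have hwt : off t (p - 1) c < t := off_lt ht _ _
    rcases mod2 (off t (p - 1) c + (t - off t (p - 1) c₀)) ht (by omega) with h1 | h1
    · right
      rw [mem_arc_coord ht hp1 hp2 hlx hd1 hd2]
      rcases mod2 (off t (p - 1) c + off t ax p) ht (by omega) with h2 | h2 <;> omega
    · left
      rw [mem_arc_coord ht hp1 hp2 hlz hd1 hd2]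
      rcases mod2 (off t (p - 1) c + off t az p) ht (by omega) with h2 | h2 <;> omega
  have hTlen : max (off t ax p) (off t ay p) +
      max (lx - 1 - off t ax p) (ly - 1 - off t ay p) + 1 ≤ t := by omega
  have h1 := Set.ncard_le_ncard
    (pair_subset ht hlx hly hp1 hp2 hpX hpY hTlen) (arcSet_finite _ _ _)
  have h2 := Set.ncard_le_ncard hSsub
    ((arcSet_finite _ _ _).union (arcSet_finite _ _ _))
  rw [ncard_arcSet ht hTlen] at h1
  rw [ncard_arcSet ht hlen] at h2
  omega

end Key3

lemma key3 {t : ℕ} (ht : 0 < t) {X Y Z : Set ℕ} (hX : IsArc t X) (hY : IsArc t Y)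
    (hZ : IsArc t Z) {p c₀ : ℕ} (hpX : p ∈ X) (hpY : p ∈ Y) (hpZ : p ∈ Z)
    (hc : c₀ ∈ Z) (hcX : c₀ ∉ X) (hcY : c₀ ∉ Y) :
    (X ∪ Y).ncard < (Z ∪ X).ncard ∨ (X ∪ Y).ncard < (Z ∪ Y).ncard := by
  obtain ⟨ax, lx, hlx, rfl⟩ := hX
  obtain ⟨ay, ly, hly, rfl⟩ := hY
  obtain ⟨az, lz, hlz, rfl⟩ := hZ
  rcases lt_or_ge (off t (p - 1) c₀ + off t az p) t with hcase | hcase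
  · rcases le_total (off t ay p) (off t ax p) with hba | hba
    · exact Or.inl (key3core1 ht hlx hly hlz hpX hpY hpZ hc hcX hcY hba hcase)
    · refine Or.inr ?_
      rw [Set.union_comm (arcSet t ax lx)]
      exact key3core1 ht hly hlx hlz hpY hpX hpZ hc hcY hcX hba hcase
  · rcases le_total (ly - 1 - off t ay p) (lx - 1 - off t ax p) with hff | hff
    · exact Or.inl (key3core2 ht hlx hly hlz hpX hpY hpZ hc hcX hcY hff hcase)
    · refine Or.inr ?_
      rw [Set.union_comm (arcSet t ax lx)]
      exact key3core2 ht hly hlx hlz hpY hpX hpZ hc hcY hcX hff hcase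

section Graph

open SimpleGraph Walk

variable {V : Type*} {G : SimpleGraph V}

lemma getVert_inj {u v : V} {p : G.Walk u v} (hp : p.IsPath) :
    ∀ {i j : ℕ}, i ≤ p.length → j ≤ p.length → p.getVert i = p.getVert j → i = j := by
  induction p with
  | nil => intro i j hi hj _; simp at hi hj; omega
  | cons h q ih =>
    rw [Walk.cons_isPath_iff] at hp
    intro i j hi hj hij
    match i, j with
    | 0, 0 => rfl
    | 0, j + 1 =>
      exfalso
      rw [Walk.getVert_zero, Walk.getVert_cons_succ] at hij
      exact hp.2 (Walk.mem_support_iff_exists_getVert.2 ⟨j, hij.symm, by simpa using hj⟩)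
    | i + 1, 0 =>
      exfalso
      rw [Walk.getVert_zero, Walk.getVert_cons_succ] at hij
      exact hp.2 (Walk.mem_support_iff_exists_getVert.2 ⟨i, hij, by simpa using hi⟩)
    | i + 1, j + 1 =>
      rw [Walk.getVert_cons_succ, Walk.getVert_cons_succ] at hij
      have := ih hp.1 (by simpa using hi) (by simpa using hj) hij
      omega

lemma first_edge_eq {a b : V} {p : G.Walk a b} (hp : p.IsPath) {z : V}
    (he : s(a, z) ∈ p.edges) : p.getVert 1 = z := by
  cases p with
  | nil => simp at he
  | @cons _ c _ h q =>
    rw [Walk.cons_isPath_iff] at hp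
    rw [Walk.edges_cons, List.mem_cons] at he
    rcases he with he | he
    · have hzc : z = c := by
        rw [Sym2.eq_iff] at he
        rcases he with ⟨-, h2⟩ | ⟨h1, h2⟩
        · exact h2
        · subst h1; exact absurd rfl h.ne
      rw [Walk.getVert_cons_succ, Walk.getVert_zero, hzc]
    · exact absurd (Walk.fst_mem_support_of_mem_edges q he) hp.2

/-- In an acyclic graph, a neighbor of the start of a path lying on the path must
be the second vertex. -/
lemma neighbor_on_path [DecidableEq V] {u v : V} {p : G.Walk u v} (hp : p.IsPath)
    (hac : G.IsAcyclic) {w : V} (h : G.Adj u w) (hws : w ∈ p.support) : w = p.getVert 1 := by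
  cases p with
  | nil =>
    simp only [Walk.support_nil, List.mem_singleton] at hws
    exact absurd hws.symm h.ne
  | @cons _ c _ h' q =>
    rw [Walk.cons_isPath_iff] at hp
    rw [Walk.support_cons, List.mem_cons] at hws
    rcases hws with rfl | hws
    · exact absurd rfl h.ne
    by_contra hne
    rw [Walk.getVert_cons_succ, Walk.getVert_zero] at hne
    have hq' := hp.1.takeUntil hws
    have hu : u ∉ (q.takeUntil w hws).support :=
      fun hmem => hp.2 (Walk.support_takeUntil_subset q hws hmem)
    have hpp : (Walk.cons h' (q.takeUntil w hws)).IsPath := hq'.cons hu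
    have hcyc : (Walk.cons h.symm (Walk.cons h' (q.takeUntil w hws))).IsCycle := by
      rw [Walk.cons_isCycle_iff]
      refine ⟨hpp, fun hmem => ?_⟩
      rw [Walk.edges_cons, List.mem_cons] at hmem
      rcases hmem with hmem | hmem
      · rw [Sym2.eq_iff] at hmem
        rcases hmem with ⟨h1, h2⟩ | ⟨h1, h2⟩
        · exact h.ne h1.symm
        · exact hne h1
      · exact hu (Walk.snd_mem_support_of_mem_edges _ hmem)
    exact hac _ hcyc

lemma exists_adj_of_connected (hconn : G.Connected) (hE : G.edgeSet.Nonempty) (x : V) :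
    ∃ y, G.Adj x y := by
  obtain ⟨e, he⟩ := hE
  induction e with
  | _ a b =>
    rw [SimpleGraph.mem_edgeSet] at he
    obtain ⟨w⟩ := hconn x a
    cases w with
    | nil => exact ⟨b, he⟩
    | cons h _ => exact ⟨_, h⟩

lemma exists_first_meet {y u : V} (w : G.Walk y u) (S : Set V) (hu : u ∈ S) :
    ∃ m, m ∈ S ∧ ∃ (w₁ : G.Walk y m) (w₂ : G.Walk m u), w = w₁.append w₂ ∧
      ∀ z ∈ w₁.support, z ∈ S → z = m := by
  induction w with
  | nil =>
    refine ⟨_, hu, Walk.nil, Walk.nil, rfl, ?_⟩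
    intro z hz _
    simpa using hz
  | @cons a b c h w' ih =>
    by_cases hy : a ∈ S
    · refine ⟨a, hy, Walk.nil, Walk.cons h w', rfl, ?_⟩
      intro z hz _
      simpa using hz
    · obtain ⟨m, hm, w₁, w₂, heq, hmin⟩ := ih hu
      refine ⟨m, hm, Walk.cons h w₁, w₂, by rw [Walk.cons_append, heq], ?_⟩
      intro z hz hzS
      rw [Walk.support_cons, List.mem_cons] at hz
      rcases hz with rfl | hz
      · exact absurd hzS hy
      · exact hmin z hz hzS

lemma append_path {u m w : V} {p : G.Walk u m} {q : G.Walk m w} (hp : p.IsPath)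
    (hq : q.IsPath) (hint : ∀ z ∈ p.support, z ∈ q.support → z = m) :
    (p.append q).IsPath := by
  rw [Walk.isPath_def, Walk.support_append, List.nodup_append]
  have hqd := hq.support_nodup
  have hcons := q.support_eq_cons
  refine ⟨hp.support_nodup, ?_, ?_⟩
  · rw [hcons] at hqd
    exact hqd.of_cons
  · intro z hz z' hz2 hzz'
    rw [← hzz'] at hz2
    have hzq : z ∈ q.support := List.mem_of_mem_tail hz2
    have := hint z hz hzq
    subst this
    rw [hcons] at hqd
    exact (List.nodup_cons.1 hqd).1 hz2

end Graph

section Cover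

open SimpleGraph Walk

variable {V : Type*} (H : SimpleGraph V) (φ : Sym2 V → ℕ)

def covA (x : V) : Set ℕ := φ '' H.incidenceSet x

def cov {u v : V} (p : H.Walk u v) : Set ℕ := ⋃ x ∈ p.support, covA H φ x

variable {H} {φ}

lemma mem_cov_iff {u v : V} {p : H.Walk u v} {c : ℕ} :
    c ∈ cov H φ p ↔ ∃ x ∈ p.support, c ∈ covA H φ x := by
  simp [cov]

lemma subset_cov {u v : V} {p : H.Walk u v} {x : V} (hx : x ∈ p.support) :
    covA H φ x ⊆ cov H φ p := fun c hc => mem_cov_iff.2 ⟨x, hx, hc⟩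

lemma cov_nil {u : V} : cov H φ (Walk.nil : H.Walk u u) = covA H φ u := by
  ext c; simp [mem_cov_iff]

lemma cov_cons {u v w : V} (h : H.Adj u v) (p : H.Walk v w) :
    cov H φ (Walk.cons h p) = covA H φ u ∪ cov H φ p := by
  ext c
  simp only [mem_cov_iff, Walk.support_cons, List.mem_cons, Set.mem_union]
  constructor
  · rintro ⟨x, rfl | hx, hc⟩
    · exact Or.inl hc
    · exact Or.inr ⟨x, hx, hc⟩
  · rintro (hc | ⟨x, hx, hc⟩)
    · exact ⟨u, Or.inl rfl, hc⟩
    · exact ⟨x, Or.inr hx, hc⟩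

lemma cov_append {u v w : V} (p : H.Walk u v) (q : H.Walk v w) :
    cov H φ (p.append q) = cov H φ p ∪ cov H φ q := by
  ext c
  simp only [mem_cov_iff, Walk.mem_support_append_iff, Set.mem_union]
  constructor
  · rintro ⟨x, hx | hx, hc⟩
    · exact Or.inl ⟨x, hx, hc⟩
    · exact Or.inr ⟨x, hx, hc⟩
  · rintro (⟨x, hx, hc⟩ | ⟨x, hx, hc⟩)
    · exact ⟨x, Or.inl hx, hc⟩
    · exact ⟨x, Or.inr hx, hc⟩

lemma cov_reverse {u v : V} (p : H.Walk u v) : cov H φ p.reverse = cov H φ p := by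
  ext c
  simp [mem_cov_iff, Walk.support_reverse]

lemma cov_mono {u v u' v' : V} {p : H.Walk u v} {q : H.Walk u' v'}
    (hsub : ∀ x ∈ p.support, x ∈ q.support) : cov H φ p ⊆ cov H φ q := by
  intro c hc
  obtain ⟨x, hx, hc⟩ := mem_cov_iff.1 hc
  exact mem_cov_iff.2 ⟨x, hsub x hx, hc⟩

lemma cov_isArc {t : ℕ} (ht : 0 < t)
    (hA : ∀ x : V, IsArc t (covA H φ x) ∧ (covA H φ x).Nonempty)
    {u v : V} (p : H.Walk u v) : IsArc t (cov H φ p) ∧ (cov H φ p).Nonempty := by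
  induction p with
  | nil => rw [cov_nil]; exact hA _
  | @cons a b c h q ih =>
    rw [cov_cons]
    have hmem1 : s(a, b) ∈ H.incidenceSet a := ⟨h, Sym2.mem_mk_left a b⟩
    have hmem2 : s(a, b) ∈ H.incidenceSet b := ⟨h, Sym2.mem_mk_right a b⟩
    refine ⟨IsArc.union ht (hA a).1 ih.1 ?_, ?_⟩
    · exact ⟨φ s(a, b), ⟨s(a, b), hmem1, rfl⟩,
        subset_cov (Walk.start_mem_support q) ⟨s(a, b), hmem2, rfl⟩⟩
    · obtain ⟨c', hc'⟩ := (hA a).2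
      exact ⟨c', Or.inl hc'⟩

lemma inc_elt {x : V} {e : Sym2 V} (he : e ∈ H.incidenceSet x) :
    ∃ z, H.Adj x z ∧ e = s(x, z) := by
  induction e with
  | _ y z =>
    obtain ⟨hadj, hmem⟩ := he
    rw [SimpleGraph.mem_edgeSet] at hadj
    rw [Sym2.mem_iff] at hmem
    rcases hmem with rfl | rfl
    · exact ⟨z, hadj, rfl⟩
    · exact ⟨y, hadj.symm, Sym2.eq_swap⟩

end Cover

lemma ncard_Icc1 (t : ℕ) : (Set.Icc 1 t).ncard = t := by
  rw [← Finset.coe_Icc, Set.ncard_coe_finset, Nat.card_Icc]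
  omega

lemma isArc_of_cyclicInterval {t : ℕ} (ht : 0 < t) {Q : Set ℕ}
    (h : IsCyclicInterval t Q) : IsArc t Q := by
  obtain ⟨i₁, hi₁, i₂, hi₂, hQ | hQ⟩ := h
  · rw [Set.mem_Icc] at hi₁ hi₂
    refine ⟨min i₁ i₂ - 1, max i₁ i₂ - min i₁ i₂ + 1, by omega, ?_⟩
    rw [hQ]
    ext c
    rw [mem_arcSet ht (by omega), Set.mem_Icc]
    by_cases hc : 1 ≤ c ∧ c ≤ t
    · unfold off
      rw [Nat.mod_eq_of_lt (a := min i₁ i₂ - 1) (by omega)]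
      rcases mod2 (c - 1 + (t - (min i₁ i₂ - 1))) ht (by omega) with h1 | h1 <;> omega
    · constructor
      · intro hcc; omega
      · intro hcc; omega
  · rw [Set.mem_Icc] at hi₁ hi₂
    by_cases heq : i₁ = i₂
    · refine ⟨0, t, le_rfl, ?_⟩
      rw [hQ, arcSet_full ht 0]
      have hempty : Set.Icc (min i₁ i₂) (max i₁ i₂) \ {i₁, i₂} = ∅ := by
        ext c
        simp only [Set.mem_diff, Set.mem_Icc, Set.mem_insert_iff, Set.mem_singleton_iff,
          Set.mem_empty_iff_false, iff_false, not_and, not_not]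
        intro hcc
        left
        omega
      rw [hempty, Set.diff_empty]
    · refine ⟨max i₁ i₂ - 1, t - (max i₁ i₂ - min i₁ i₂) + 1, by omega, ?_⟩
      rw [hQ]
      ext c
      rw [mem_arcSet ht (by omega)]
      simp only [Set.mem_diff, Set.mem_Icc, Set.mem_insert_iff, Set.mem_singleton_iff]
      by_cases hc : 1 ≤ c ∧ c ≤ t
      · unfold off
        rw [Nat.mod_eq_of_lt (a := max i₁ i₂ - 1) (by omega)]
        rcases mod2 (c - 1 + (t - (max i₁ i₂ - 1))) ht (by omega) with h1 | h1 <;> omega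
      · constructor
        · intro hcc; omega
        · intro hcc; omega

section Necessity

open SimpleGraph Walk

variable {V : Type*} [Fintype V] [DecidableEq V]

theorem necessity (H : SimpleGraph V) [DecidableRel H.Adj]
    (hH : H.IsTree) (hE : H.edgeSet.Nonempty) {t : ℕ} {φ : Sym2 V → ℕ}
    (hcol : IsCyclicIntervalColoring H t φ) : H.maxDegree ≤ t ∧ t ≤ treeM H := by
  obtain ⟨⟨hrange, hproper, hsurj⟩, hcyc⟩ := hcol
  have ht : 0 < t := by
    obtain ⟨e, he⟩ := hE
    have := hrange e he
    rw [Set.mem_Icc] at this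
    omega
  have hconn := hH.isConnected
  have hac := hH.IsAcyclic
  have hadj : ∀ x : V, ∃ y, H.Adj x y := exists_adj_of_connected hconn hE
  have hArc : ∀ x : V, IsArc t (covA H φ x) ∧ (covA H φ x).Nonempty := by
    intro x
    obtain ⟨y, hy⟩ := hadj x
    have hmem : s(x, y) ∈ H.incidenceSet x := ⟨hy, Sym2.mem_mk_left x y⟩
    exact ⟨isArc_of_cyclicInterval ht (hcyc x ⟨_, hmem⟩), ⟨φ s(x, y), ⟨_, hmem, rfl⟩⟩⟩
  have hcovIcc : ∀ {a b : V} (p : H.Walk a b), cov H φ p ⊆ Set.Icc 1 t := by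
    intro a b p c hc
    obtain ⟨x, -, hc⟩ := mem_cov_iff.1 hc
    exact IsArc.subset_Icc ht (hArc x).1 hc
  have hleaf : ∀ x w : V, H.degree x = 1 → H.Adj x w → H.incidenceSet x = {s(x, w)} := by
    intro x w hdeg hw
    ext e
    constructor
    · intro he'
      obtain ⟨z, hz, rfl⟩ := inc_elt he'
      have h1 : (H.neighborFinset x).card ≤ 1 := by
        rw [card_neighborFinset_eq_degree, hdeg]
      have h2 : z = w := Finset.card_le_one.1 h1 z (by rwa [mem_neighborFinset]) w
        (by rwa [mem_neighborFinset])
      rw [h2]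
      rfl
    · intro he'
      rw [Set.mem_singleton_iff] at he'
      subst he'
      exact ⟨hw, Sym2.mem_mk_left _ _⟩
  constructor
  · -- maxDegree ≤ t
    have hV : Nonempty V := by
      obtain ⟨e, -⟩ := hE
      exact ⟨e.out.1⟩
    obtain ⟨x, hx⟩ := H.exists_maximal_degree_vertex
    rw [hx]
    have h1 : H.incidenceSet x = ↑(H.incidenceFinset x) := by
      ext e
      rw [Finset.mem_coe, SimpleGraph.mem_incidenceFinset]
    have h2 : (H.incidenceSet x).ncard = H.degree x := by
      rw [h1, Set.ncard_coe_finset, card_incidenceFinset_eq_degree]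
    have hinj : Set.InjOn φ (H.incidenceSet x) := by
      intro e1 h1' e2 h2' heq
      by_contra hne
      exact hproper e1 h1'.1 e2 h2'.1 hne ⟨x, h1'.2, h2'.2⟩ heq
    have h4 : φ '' H.incidenceSet x ⊆ Set.Icc 1 t := by
      rintro c ⟨e, he, rfl⟩
      exact hrange e he.1
    have h5 := Set.ncard_le_ncard h4 (Set.toFinite _)
    rwa [Set.ncard_image_of_injOn hinj, h2, ncard_Icc1] at h5
  · -- t ≤ treeM H
    have hbdd : BddAbove {n | ∃ (u v : V) (p : H.Walk u v), p.IsPath ∧ (pathTP H p).ncard = n} := by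
      refine ⟨(Set.univ : Set (Sym2 V)).ncard, ?_⟩
      rintro n ⟨u, v, p, hp, rfl⟩
      exact Set.ncard_le_ncard (Set.subset_univ _) (Set.toFinite _)
    have hstep : ∀ (a b : V) (p : H.Walk a b), p.IsPath → cov H φ p ≠ Set.Icc 1 t →
        ∃ (a' b' : V) (p' : H.Walk a' b'), p'.IsPath ∧
          (cov H φ p).ncard < (cov H φ p').ncard := by
      intro a b p hp hfull
      obtain ⟨c₀, hc₀Icc, hc₀⟩ : ∃ c₀ ∈ Set.Icc 1 t, c₀ ∉ cov H φ p := by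
        by_contra hcon
        push_neg at hcon
        exact hfull (subset_antisymm (hcovIcc p) hcon)
      obtain ⟨e, he, rfl⟩ := hsurj c₀ hc₀Icc
      obtain ⟨⟨y, z⟩, rfl⟩ : ∃ yz : V × V, s(yz.1, yz.2) = e := ⟨e.out, e.out_eq⟩
      have hy : y ∉ p.support := fun hmem =>
        hc₀ (subset_cov hmem ⟨s(y, z), ⟨he, Sym2.mem_mk_left _ _⟩, rfl⟩)
      obtain ⟨q, hq, -⟩ := hH.existsUnique_path y a
      obtain ⟨m, hm, w₁, w₂, heq, hmin⟩ :=
        exists_first_meet q {x | x ∈ p.support} p.start_mem_support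
      have hw₁ : w₁.IsPath := by
        rw [heq] at hq
        exact hq.of_append_left
      have hmp : m ∈ p.support := hm
      have htk := hp.takeUntil hmp
      have hdr := hp.dropUntil hmp
      have hcovp : cov H φ p = cov H φ (p.takeUntil m hmp) ∪ cov H φ (p.dropUntil m hmp) := by
        conv_lhs => rw [← Walk.take_spec p hmp]
        exact cov_append _ _
      have hP1 : (w₁.append (p.dropUntil m hmp)).IsPath :=
        append_path hw₁ hdr
          (fun z' hz hz2 => hmin z' hz (Walk.support_dropUntil_subset p hmp hz2))
      have hP2 : (w₁.append (p.takeUntil m hmp).reverse).IsPath :=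
        append_path hw₁ htk.reverse (fun z' hz hz2 => hmin z' hz
          (Walk.support_takeUntil_subset p hmp
            (by rwa [Walk.support_reverse, List.mem_reverse] at hz2)))
      obtain ⟨pc, hpc⟩ := (hArc m).2
      have hpcX : pc ∈ cov H φ (p.takeUntil m hmp) :=
        subset_cov (Walk.end_mem_support _) hpc
      have hpcY : pc ∈ cov H φ (p.dropUntil m hmp) :=
        subset_cov (Walk.start_mem_support _) hpc
      have hpcZ : pc ∈ cov H φ w₁ := subset_cov (Walk.end_mem_support _) hpc
      have hc₀Z : φ s(y, z) ∈ cov H φ w₁ :=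
        subset_cov (Walk.start_mem_support _) ⟨s(y, z), ⟨he, Sym2.mem_mk_left _ _⟩, rfl⟩
      have hc₀X : φ s(y, z) ∉ cov H φ (p.takeUntil m hmp) := fun h =>
        hc₀ (hcovp ▸ Or.inl h)
      have hc₀Y : φ s(y, z) ∉ cov H φ (p.dropUntil m hmp) := fun h =>
        hc₀ (hcovp ▸ Or.inr h)
      have harcs := fun {a' b' : V} (p' : H.Walk a' b') => (cov_isArc ht hArc p').1
      rcases key3 ht (harcs _) (harcs _) (harcs _) hpcX hpcY hpcZ hc₀Z hc₀X hc₀Y with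
        hlt | hlt
      · refine ⟨y, a, w₁.append (p.takeUntil m hmp).reverse, hP2, ?_⟩
        rw [hcovp, cov_append, cov_reverse]
        exact hlt
      · refine ⟨y, b, w₁.append (p.dropUntil m hmp), hP1, ?_⟩
        rw [hcovp, cov_append]
        exact hlt
    have hiter : ∀ n : ℕ, ∃ (a b : V) (p : H.Walk a b), p.IsPath ∧
        (cov H φ p = Set.Icc 1 t ∨ n ≤ (cov H φ p).ncard) := by
      intro n
      induction n with
      | zero =>
        obtain ⟨e, -⟩ := hE
        exact ⟨e.out.1, e.out.1, Walk.nil, Walk.IsPath.nil, Or.inr (Nat.zero_le _)⟩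
      | succ n ih =>
        obtain ⟨a, b, p, hp, hor⟩ := ih
        by_cases hfull : cov H φ p = Set.Icc 1 t
        · exact ⟨a, b, p, hp, Or.inl hfull⟩
        · rcases hor with hor | hn
          · exact absurd hor hfull
          · obtain ⟨a', b', p', hp', hlt⟩ := hstep a b p hp hfull
            exact ⟨a', b', p', hp', Or.inr (by omega)⟩
    obtain ⟨a, b, p, hp, hor⟩ := hiter t
    have hfullp : cov H φ p = Set.Icc 1 t := by
      rcases hor with h | h
      · exact h
      · exact Set.eq_of_subset_of_ncard_le (hcovIcc p)
          (by rw [ncard_Icc1]; exact h) (Set.toFinite _)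
    have hext : ∀ (n : ℕ) (a b : V) (p : H.Walk a b), p.IsPath →
        Fintype.card V - p.length ≤ n →
        ∃ (a' b' : V) (p' : H.Walk a' b'), p'.IsPath ∧ cov H φ p ⊆ cov H φ p' ∧
          H.degree a' = 1 ∧ H.degree b' = 1 := by
      intro n
      induction n with
      | zero =>
        intro a b p hp hlen
        exfalso
        have := hp.length_lt
        omega
      | succ n ih =>
        intro a b p hp hlen
        by_cases ha : H.degree a = 1
        · by_cases hb : H.degree b = 1
          · exact ⟨a, b, p, hp, subset_rfl, ha, hb⟩
          · have hdb : 1 ≤ H.degree b := (H.degree_pos_iff_exists_adj b).2 (hadj b)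
            obtain ⟨w, hw, hwne⟩ : ∃ w, H.Adj b w ∧ w ∉ p.support := by
              have h2 : 1 < (H.neighborFinset b).card := by
                rw [card_neighborFinset_eq_degree]
                omega
              obtain ⟨w₁, hw₁, w₂, hw₂, hne12⟩ := Finset.one_lt_card.1 h2
              rw [mem_neighborFinset] at hw₁ hw₂
              by_cases hc1 : w₁ ∈ p.support
              · have he1 := neighbor_on_path hp.reverse hac hw₁
                  (by rwa [Walk.support_reverse, List.mem_reverse])
                by_cases hc2 : w₂ ∈ p.support
                · have he2 := neighbor_on_path hp.reverse hac hw₂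
                    (by rwa [Walk.support_reverse, List.mem_reverse])
                  exact absurd (he1.trans he2.symm) hne12
                · exact ⟨w₂, hw₂, hc2⟩
              · exact ⟨w₁, hw₁, hc1⟩
            have hp' : (p.concat hw).IsPath := by
              rw [Walk.concat]
              refine append_path hp ?_ ?_
              · rw [Walk.cons_isPath_iff]
                refine ⟨Walk.IsPath.nil, ?_⟩
                simp only [Walk.support_nil, List.mem_singleton]
                exact fun hbw => hw.ne hbw
              · intro z' hz hz2
                simp only [Walk.support_cons, Walk.support_nil, List.mem_cons,
                  List.mem_singleton, List.not_mem_nil, or_false] at hz2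
                rcases hz2 with rfl | rfl
                · rfl
                · exact absurd hz hwne
            obtain ⟨a', b', p'', hp'', hsub, hda, hdb'⟩ := ih a w (p.concat hw) hp'
              (by rw [Walk.length_concat]; omega)
            refine ⟨a', b', p'', hp'', ?_, hda, hdb'⟩
            refine subset_trans (cov_mono ?_) hsub
            intro x hx
            rw [Walk.support_concat]
            exact List.mem_append_left _ hx
        · have hda : 1 ≤ H.degree a := (H.degree_pos_iff_exists_adj a).2 (hadj a)
          obtain ⟨w, hw, hwne⟩ : ∃ w, H.Adj a w ∧ w ∉ p.support := by
            have h2 : 1 < (H.neighborFinset a).card := by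
              rw [card_neighborFinset_eq_degree]
              omega
            obtain ⟨w₁, hw₁, w₂, hw₂, hne12⟩ := Finset.one_lt_card.1 h2
            rw [mem_neighborFinset] at hw₁ hw₂
            by_cases hc1 : w₁ ∈ p.support
            · have he1 := neighbor_on_path hp hac hw₁ hc1
              by_cases hc2 : w₂ ∈ p.support
              · have he2 := neighbor_on_path hp hac hw₂ hc2
                exact absurd (he1.trans he2.symm) hne12
              · exact ⟨w₂, hw₂, hc2⟩
            · exact ⟨w₁, hw₁, hc1⟩
          have hp' : (Walk.cons hw.symm p).IsPath := hp.cons hwne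
          obtain ⟨a', b', p'', hp'', hsub, hda', hdb'⟩ := ih w b (Walk.cons hw.symm p) hp'
            (by rw [Walk.length_cons]; omega)
          refine ⟨a', b', p'', hp'', ?_, hda', hdb'⟩
          refine subset_trans (cov_mono ?_) hsub
          intro x hx
          rw [Walk.support_cons]
          exact List.mem_cons_of_mem _ hx
    obtain ⟨a', b', p', hp', hcov', hda, hdb⟩ :=
      hext (Fintype.card V) a b p hp (by omega)
    have hfull' : cov H φ p' = Set.Icc 1 t :=
      subset_antisymm (hcovIcc p') (hfullp ▸ hcov')
    have hcovelt : ∀ c ∈ cov H φ p', ∃ x ∈ p'.support, ∃ e ∈ H.incidenceSet x, φ e = c := by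
      intro c hc
      obtain ⟨x, hx, e, he, heq⟩ := mem_cov_iff.1 hc
      exact ⟨x, hx, e, he, heq⟩
    rcases Nat.lt_or_ge p'.length 2 with hlen | hlen
    · -- small cases: t = 1
      have hM1 : (1 : ℕ) ∈ {n | ∃ (u v : V) (pp : H.Walk u v), pp.IsPath ∧
          (pathTP H pp).ncard = n} := by
        obtain ⟨e, he⟩ := hE
        obtain ⟨⟨y, z⟩, rfl⟩ : ∃ yz : V × V, s(yz.1, yz.2) = e := ⟨e.out, e.out_eq⟩
        rw [SimpleGraph.mem_edgeSet] at he
        refine ⟨y, z, Walk.cons he Walk.nil, ?_, ?_⟩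
        · rw [Walk.cons_isPath_iff]
          refine ⟨Walk.IsPath.nil, ?_⟩
          simp only [Walk.support_nil, List.mem_singleton]
          exact fun hyz => he.ne hyz
        · rw [pathTP, if_pos (by simp)]
          have hset : {e' | e' ∈ (Walk.cons he Walk.nil).edges} = {s(y, z)} := by
            ext e'
            simp [Walk.edges_cons]
          rw [hset, Set.ncard_singleton]
      have ht1 : t = 1 := by
        have hcard : (cov H φ p').ncard = t := by rw [hfull', ncard_Icc1]
        rcases Nat.lt_or_ge p'.length 1 with hl0 | hl1
        · -- length 0
          have hab : a' = b' := by
            have h0 : p'.length = 0 := by omega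
            have hgl := p'.getVert_length
            rw [h0, Walk.getVert_zero] at hgl
            exact hgl
          obtain ⟨wa, hwa⟩ := hadj a'
          have hia := hleaf a' wa hda hwa
          have hcsub : cov H φ p' ⊆ {φ s(a', wa)} := by
            intro c hc
            obtain ⟨x, hx, e, he, rfl⟩ := hcovelt c hc
            have hxa : x = a' := by
              obtain ⟨i, hgv, hi⟩ := Walk.mem_support_iff_exists_getVert.1 hx
              have h0 : i = 0 := by omega
              rw [h0, Walk.getVert_zero] at hgv
              exact hgv.symm
            subst hxa
            rw [hia, Set.mem_singleton_iff] at he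
            rw [he]
            rfl
          have hle := Set.ncard_le_ncard hcsub (Set.toFinite _)
          rw [hcard, Set.ncard_singleton] at hle
          omega
        · -- length 1
          have h1 : p'.length = 1 := by omega
          have hb'gv : p'.getVert 1 = b' := by
            rw [← h1, p'.getVert_length]
          have hadj1 : H.Adj a' b' := by
            have := p'.adj_getVert_succ (i := 0) (by omega)
            rwa [Walk.getVert_zero, hb'gv] at this
          have hia := hleaf a' b' hda hadj1
          have hib := hleaf b' a' hdb hadj1.symm
          have hcsub : cov H φ p' ⊆ {φ s(a', b')} := by
            intro c hc
            obtain ⟨x, hx, e, he, rfl⟩ := hcovelt c hc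
            have hxab : x = a' ∨ x = b' := by
              obtain ⟨i, hgv, hi⟩ := Walk.mem_support_iff_exists_getVert.1 hx
              have h0 : i = 0 ∨ i = 1 := by omega
              rcases h0 with rfl | rfl
              · rw [Walk.getVert_zero] at hgv
                exact Or.inl hgv.symm
              · rw [hb'gv] at hgv
                exact Or.inr hgv.symm
            rcases hxab with rfl | rfl
            · rw [hia, Set.mem_singleton_iff] at he
              rw [he]
              rfl
            · rw [hib, Set.mem_singleton_iff] at he
              rw [he, Sym2.eq_swap]
              rfl
          have hle := Set.ncard_le_ncard hcsub (Set.toFinite _)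
          rw [hcard, Set.ncard_singleton] at hle
          omega
      rw [ht1]
      exact le_csSup hbdd hM1
    · -- main case: length ≥ 2
      have hx1 : p'.getVert 1 ∈ p'.support :=
        Walk.mem_support_iff_exists_getVert.2 ⟨1, rfl, by omega⟩
      have hx1a : p'.getVert 1 ≠ a' := by
        intro hh
        have := getVert_inj hp' (i := 1) (j := 0) (by omega) (by omega)
          (by rw [Walk.getVert_zero]; exact hh)
        omega
      have hx1b : p'.getVert 1 ≠ b' := by
        intro hh
        have := getVert_inj hp' (i := 1) (j := p'.length) (by omega) le_rfl
          (by rw [Walk.getVert_length]; exact hh)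
        omega
      have hxls : p'.reverse.getVert 1 ∈ p'.support := by
        have h1 : p'.reverse.getVert 1 ∈ p'.reverse.support :=
          Walk.mem_support_iff_exists_getVert.2 ⟨1, rfl, by rw [Walk.length_reverse]; omega⟩
        rwa [Walk.support_reverse, List.mem_reverse] at h1
      have hxlb : p'.reverse.getVert 1 ≠ b' := by
        intro hh
        have := getVert_inj hp'.reverse (i := 1) (j := 0)
          (by rw [Walk.length_reverse]; omega) (by omega)
          (by rw [Walk.getVert_zero]; exact hh)
        omega
      have hxla : p'.reverse.getVert 1 ≠ a' := by
        intro hh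
        have h2 := getVert_inj hp'.reverse (i := 1) (j := p'.reverse.length)
          (by rw [Walk.length_reverse]; omega) le_rfl
          (by rw [Walk.getVert_length]; exact hh)
        rw [Walk.length_reverse] at h2
        omega
      have hadj1 : H.Adj a' (p'.getVert 1) := by
        have := p'.adj_getVert_succ (i := 0) (by omega)
        rwa [Walk.getVert_zero] at this
      have hadjl : H.Adj b' (p'.reverse.getVert 1) := by
        have := p'.reverse.adj_getVert_succ (i := 0) (by rw [Walk.length_reverse]; omega)
        rwa [Walk.getVert_zero] at this
      have hTPsub : Set.Icc 1 t ⊆ φ '' pathTP H p' := by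
        rw [← hfull']
        intro c hc
        obtain ⟨x, hx, e, he, rfl⟩ := hcovelt c hc
        rw [pathTP, if_neg (by omega)]
        by_cases hxa : x = a'
        · subst hxa
          rw [hleaf x (p'.getVert 1) hda hadj1, Set.mem_singleton_iff] at he
          subst he
          exact Set.mem_image_of_mem φ (Set.mem_biUnion ⟨hx1, hx1a, hx1b⟩
            ⟨hadj1, Sym2.mem_mk_right _ _⟩)
        · by_cases hxb : x = b'
          · subst hxb
            rw [hleaf x (p'.reverse.getVert 1) hdb hadjl, Set.mem_singleton_iff] at he
            subst he
            exact Set.mem_image_of_mem φ (Set.mem_biUnion ⟨hxls, hxla, hxlb⟩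
              ⟨hadjl, Sym2.mem_mk_right _ _⟩)
          · exact Set.mem_image_of_mem φ (Set.mem_biUnion ⟨hx, hxa, hxb⟩ he)
      have h6 := Set.ncard_le_ncard hTPsub (Set.toFinite _)
      rw [ncard_Icc1] at h6
      have h7 : (φ '' pathTP H p').ncard ≤ (pathTP H p').ncard :=
        Set.ncard_image_le (Set.toFinite _)
      exact le_trans (le_trans h6 h7) (le_csSup hbdd ⟨a', b', p', hp', rfl⟩)

end Necessity

section Constr

open SimpleGraph Walk

variable {V : Type*} [Fintype V] [DecidableEq V] {H : SimpleGraph V} {u : V}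

lemma eq_cons_of_length_one {a b : V} {p : H.Walk a b} (h : p.length = 1) :
    ∃ had : H.Adj a b, p = Walk.cons had Walk.nil := by
  cases p with
  | nil => simp at h
  | cons h' q =>
    have h0 : q.length = 0 := by simpa using h
    have hq : q.Nil := Walk.nil_iff_length_eq.2 h0
    cases hq
    exact ⟨h', rfl⟩

variable (pth : ∀ x : V, H.Walk u x)

/-- parent of a vertex in the tree rooted at `u`. -/
def parF (x : V) : V := (pth x).reverse.getVert 1

/-- depth of a vertex. -/
def depF (x : V) : ℕ := (pth x).length

open scoped Classical in
/-- children of a vertex. -/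
noncomputable def childF (x : V) : Finset V :=
  Finset.univ.filter (fun c => H.Adj x c ∧ depF pth c = depF pth x + 1)

lemma mem_childF {x c : V} :
    c ∈ childF pth x ↔ H.Adj x c ∧ depF pth c = depF pth x + 1 := by
  classical
  simp [childF]

section WithHyps

variable (hpth : ∀ x, (pth x).IsPath)
variable (huniq : ∀ (x : V) (q : H.Walk u x), q.IsPath → q = pth x)
variable (hac : H.IsAcyclic)

include hpth huniq

lemma pth_self : pth u = Walk.nil := (huniq u Walk.nil Walk.IsPath.nil).symm

lemma depF_self : depF pth u = 0 := by
  rw [depF, pth_self pth hpth huniq]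
  rfl

lemma ne_root_of_depF {x : V} (h : depF pth x ≠ 0) : x ≠ u := by
  intro hx
  subst hx
  exact h (depF_self pth hpth huniq)

/-- structural decomposition at the parent. -/
lemma parK {x : V} (hx : x ≠ u) :
    ∃ h : H.Adj (parF pth x) x, pth x = (pth (parF pth x)).concat h ∧
      depF pth x = depF pth (parF pth x) + 1 := by
  have hnil : ¬(pth x).Nil := by
    intro hn
    exact hx hn.eq.symm
  have hrnil : ¬(pth x).reverse.Nil := by
    rw [Walk.nil_iff_length_eq, Walk.length_reverse]
    rw [Walk.nil_iff_length_eq] at hnil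
    exact hnil
  have hadj : H.Adj x ((pth x).reverse.getVert 1) := (pth x).reverse.adj_snd hrnil
  have hdec : Walk.cons hadj (pth x).reverse.tail = (pth x).reverse :=
    Walk.cons_tail_eq _ hrnil
  have heq : pth x = ((pth x).reverse.tail.reverse).concat hadj.symm := by
    conv_lhs => rw [← (pth x).reverse_reverse, ← hdec, Walk.reverse_cons]
    rfl
  have hinit : ((pth x).reverse.tail.reverse).IsPath := by
    have h1 := hpth x
    rw [heq, Walk.concat] at h1
    exact h1.of_append_left
  have hpar : pth (parF pth x) = (pth x).reverse.tail.reverse :=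
    (huniq _ _ hinit).symm
  refine ⟨hadj.symm, ?_, ?_⟩
  · rw [hpar]
    exact heq
  · rw [depF, depF, hpar]
    conv_lhs => rw [heq]
    rw [Walk.length_concat]
    rfl

omit hpth huniq in
include hac in
/-- adjacency dichotomy. -/
lemma adjK (hpth : ∀ x, (pth x).IsPath)
    (huniq : ∀ (x : V) (q : H.Walk u x), q.IsPath → q = pth x)
    {x y : V} (h : H.Adj x y) :
    (parF pth y = x ∧ depF pth y = depF pth x + 1) ∨
      (parF pth x = y ∧ depF pth x = depF pth y + 1) := by
  by_cases hy : y ∈ (pth x).support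
  · right
    have htk := (hpth x).takeUntil hy
    have hdr := (hpth x).dropUntil hy
    have hspec := Walk.take_spec (pth x) hy
    have htkeq : (pth x).takeUntil y hy = pth y := huniq y _ htk
    -- the dropped part has length 1
    have hdnil : ((pth x).dropUntil y hy).length ≠ 0 := by
      intro h0
      have := Walk.nil_iff_length_eq.2 h0
      exact h.ne' this.eq
    have hdlen : ((pth x).dropUntil y hy).length = 1 := by
      by_contra hne1
      -- length ≥ 2 gives a cycle
      have hlen2 : 2 ≤ ((pth x).dropUntil y hy).length := by omega
      have hnd : s(x, y) ∉ ((pth x).dropUntil y hy).edges := by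
        intro hmem
        have hmem' : s(x, y) ∈ ((pth x).dropUntil y hy).reverse.edges := by
          rw [Walk.edges_reverse, List.mem_reverse]
          exact hmem
        have hgv1 := first_edge_eq hdr.reverse hmem'
        have hgvl : ((pth x).dropUntil y hy).reverse.getVert
            ((pth x).dropUntil y hy).reverse.length = y := Walk.getVert_length _
        have := getVert_inj hdr.reverse (i := 1)
          (j := ((pth x).dropUntil y hy).reverse.length)
          (by rw [Walk.length_reverse]; omega) le_rfl (by rw [hgv1, hgvl])
        rw [Walk.length_reverse] at this
        omega
      have hcyc : (Walk.cons h ((pth x).dropUntil y hy)).IsCycle :=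
        (Walk.cons_isCycle_iff _ h).2 ⟨hdr, hnd⟩
      exact hac _ hcyc
    obtain ⟨had, hdeq⟩ := eq_cons_of_length_one hdlen
    have hxeq : pth x = (pth y).concat had := by
      conv_lhs => rw [← hspec, htkeq, hdeq]
      rfl
    constructor
    · rw [parF, hxeq, Walk.reverse_concat, Walk.getVert_cons_succ, Walk.getVert_zero]
    · rw [depF, depF, hxeq, Walk.length_concat]
  · left
    have hw : ((pth x).concat h).IsPath := by
      rw [Walk.isPath_def, Walk.support_concat, List.nodup_append]
      refine ⟨(hpth x).support_nodup, List.nodup_singleton _, ?_⟩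
      intro z hz z' hz2 hzz'
      rw [← hzz'] at hz2
      rw [List.mem_singleton] at hz2
      subst hz2
      exact hy hz
    have hyeq : pth y = (pth x).concat h := (huniq y _ hw).symm
    constructor
    · rw [parF, hyeq, Walk.reverse_concat, Walk.getVert_cons_succ, Walk.getVert_zero]
    · rw [depF, depF, hyeq, Walk.length_concat]

omit hpth huniq in
include hac in
lemma parF_of_child (hpth : ∀ x, (pth x).IsPath)
    (huniq : ∀ (x : V) (q : H.Walk u x), q.IsPath → q = pth x)
    {x c : V} (hc : c ∈ childF pth x) : parF pth c = x := by
  rw [mem_childF] at hc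
  rcases adjK pth hac hpth huniq hc.1 with h1 | h1
  · exact h1.1
  · omega

/-- partition of the neighborhood. -/
lemma neighbor_partition [DecidableRel H.Adj] (hac : H.IsAcyclic) {x : V} :
    (x = u → H.neighborFinset x = childF pth x) ∧
    (x ≠ u → H.neighborFinset x = insert (parF pth x) (childF pth x) ∧
      parF pth x ∉ childF pth x) := by
  constructor
  · rintro rfl
    ext c
    rw [mem_neighborFinset, mem_childF]
    constructor
    · intro hadj
      refine ⟨hadj, ?_⟩
      rcases adjK pth hac hpth huniq hadj with h1 | h1
      · exact h1.2
      · rw [depF_self pth hpth huniq] at h1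
        omega
    · exact fun hh => hh.1
  · intro hx
    obtain ⟨hadm, -, hdep⟩ := parK pth hpth huniq hx
    have hnotchild : parF pth x ∉ childF pth x := by
      rw [mem_childF]
      rintro ⟨-, h2⟩
      omega
    refine ⟨?_, hnotchild⟩
    ext c
    rw [mem_neighborFinset, Finset.mem_insert, mem_childF]
    constructor
    · intro hadj
      rcases adjK pth hac hpth huniq hadj with h1 | h1
      · exact Or.inr ⟨hadj, h1.2⟩
      · left
        rw [← h1.1]
    · rintro (rfl | hh)
      · exact hadm.symm
      · exact hh.1

lemma degree_eq [DecidableRel H.Adj] (hac : H.IsAcyclic) {x : V} :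
    (x = u → H.degree x = (childF pth x).card) ∧
    (x ≠ u → H.degree x = (childF pth x).card + 1) := by
  obtain ⟨h1, h2⟩ := neighbor_partition pth hpth huniq hac
  constructor
  · intro hx
    rw [← card_neighborFinset_eq_degree, h1 hx]
  · intro hx
    obtain ⟨h3, h4⟩ := h2 hx
    rw [← card_neighborFinset_eq_degree, h3, Finset.card_insert_of_notMem h4]

end WithHyps

end Constr

section Constr2

open SimpleGraph Walk

variable {V : Type*} [Fintype V] [DecidableEq V] {H : SimpleGraph V} {u v₀ : V}
variable (pth : ∀ x : V, H.Walk u x) (p₀ : H.Walk u v₀)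

def isNextF (x c : V) : Prop :=
  ∃ i, i < p₀.length ∧ p₀.getVert i = x ∧ p₀.getVert (i + 1) = c

open scoped Classical in
noncomputable def keyF (x c : V) : ℕ :=
  if isNextF p₀ x c then Fintype.card V else (Fintype.equivFin V c : ℕ)

open scoped Classical in
noncomputable def rnkF (x c : V) : ℕ :=
  1 + ((childF pth x).filter (fun c' => keyF p₀ x c' < keyF p₀ x c)).card

noncomputable def psiF (x : V) : ℕ :=
  ((pth x).support.tail.map (fun z => rnkF pth p₀ (parF pth z) z)).sum

noncomputable def colF (t : ℕ) (x : V) : ℕ := 1 + (psiF pth p₀ x - 1) % t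

noncomputable def phiF (t : ℕ) : Sym2 V → ℕ :=
  Sym2.lift ⟨fun a b =>
    if depF pth a < depF pth b then colF pth p₀ t b
    else if depF pth b < depF pth a then colF pth p₀ t a else 0, by
      intro a b
      dsimp only
      split_ifs <;> first | rfl | omega⟩

lemma phiF_eval {t : ℕ} {a b : V} (hdep : depF pth a < depF pth b) :
    phiF pth p₀ t s(a, b) = colF pth p₀ t b := by
  rw [phiF, Sym2.lift_mk]
  dsimp only
  rw [if_pos hdep]

lemma colF_mem_Icc {t : ℕ} (ht : 0 < t) (x : V) :
    colF pth p₀ t x ∈ Set.Icc 1 t := by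
  have := Nat.mod_lt (psiF pth p₀ x - 1) ht
  rw [colF, Set.mem_Icc]
  omega

section RankLemmas

variable (hp₀ : p₀.IsPath)
include hp₀

lemma nextF_uniq {x c c' : V} (h1 : isNextF p₀ x c) (h2 : isNextF p₀ x c') : c = c' := by
  obtain ⟨i, hi, hx, hc⟩ := h1
  obtain ⟨i', hi', hx', hc'⟩ := h2
  have : i = i' := getVert_inj hp₀ (by omega) (by omega) (by rw [hx, hx'])
  subst this
  rw [← hc, ← hc']

lemma keyF_inj {x c c' : V} (h : keyF p₀ x c = keyF p₀ x c') : c = c' := by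
  classical
  rw [keyF, keyF] at h
  split_ifs at h with h1 h2 h2
  · exact nextF_uniq p₀ hp₀ h1 h2
  · exact absurd h.symm (Nat.ne_of_lt (Fintype.equivFin V c').isLt)
  · exact absurd h (Nat.ne_of_lt (Fintype.equivFin V c).isLt)
  · exact (Fintype.equivFin V).injective (Fin.val_injective h)

omit hp₀ in
lemma rnkF_one_le (x c : V) : 1 ≤ rnkF pth p₀ x c := Nat.le_add_right 1 _

omit hp₀ in
lemma rnkF_le {x c : V} (hc : c ∈ childF pth x) :
    rnkF pth p₀ x c ≤ (childF pth x).card := by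
  classical
  have hsub : (childF pth x).filter (fun c' => keyF p₀ x c' < keyF p₀ x c) ⊆
      (childF pth x).erase c := by
    intro z hz
    rw [Finset.mem_filter] at hz
    rw [Finset.mem_erase]
    refine ⟨fun hzc => ?_, hz.1⟩
    subst hzc
    exact absurd hz.2 (lt_irrefl _)
  have h1 := Finset.card_le_card hsub
  rw [Finset.card_erase_of_mem hc] at h1
  have h2 : 1 ≤ (childF pth x).card := Finset.card_pos.2 ⟨c, hc⟩
  rw [rnkF]
  omega

lemma rnkF_inj {x c c' : V} (hc : c ∈ childF pth x) (hc' : c' ∈ childF pth x)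
    (h : rnkF pth p₀ x c = rnkF pth p₀ x c') : c = c' := by
  classical
  by_contra hne
  have hkey : keyF p₀ x c ≠ keyF p₀ x c' := fun hk => hne (keyF_inj p₀ hp₀ hk)
  have key3 : ∀ d d' : V, d ∈ childF pth x → keyF p₀ x d < keyF p₀ x d' →
      rnkF pth p₀ x d < rnkF pth p₀ x d' := by
    intro d d' hd hlt
    have hsub : (childF pth x).filter (fun z => keyF p₀ x z < keyF p₀ x d) ⊆
        (childF pth x).filter (fun z => keyF p₀ x z < keyF p₀ x d') := by
      intro z hz
      rw [Finset.mem_filter] at hz ⊢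
      exact ⟨hz.1, lt_trans hz.2 hlt⟩
    have hmem : d ∈ (childF pth x).filter (fun z => keyF p₀ x z < keyF p₀ x d') :=
      Finset.mem_filter.2 ⟨hd, hlt⟩
    have hnmem : d ∉ (childF pth x).filter (fun z => keyF p₀ x z < keyF p₀ x d) := by
      rw [Finset.mem_filter]
      rintro ⟨-, hh⟩
      exact absurd hh (lt_irrefl _)
    have := Finset.card_lt_card (Finset.ssubset_iff_of_subset hsub |>.2 ⟨d, hmem, hnmem⟩)
    rw [rnkF, rnkF]
    omega
  rcases lt_trichotomy (keyF p₀ x c) (keyF p₀ x c') with hlt | heq | hlt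
  · exact absurd h (Nat.ne_of_lt (key3 c c' hc hlt))
  · exact absurd heq hkey
  · exact absurd h.symm (Nat.ne_of_lt (key3 c' c hc' hlt))

lemma rnkF_surj {x : V} {m : ℕ} (h1 : 1 ≤ m) (h2 : m ≤ (childF pth x).card) :
    ∃ c ∈ childF pth x, rnkF pth p₀ x c = m := by
  classical
  have hinj : Set.InjOn (rnkF pth p₀ x) (childF pth x) :=
    fun c hc c' hc' => rnkF_inj pth p₀ hp₀ hc hc'
  have hcard : ((childF pth x).image (rnkF pth p₀ x)).card = (childF pth x).card :=
    Finset.card_image_of_injOn hinj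
  have hsub : (childF pth x).image (rnkF pth p₀ x) ⊆
      Finset.Icc 1 (childF pth x).card := by
    intro m' hm'
    rw [Finset.mem_image] at hm'
    obtain ⟨c, hc, rfl⟩ := hm'
    rw [Finset.mem_Icc]
    exact ⟨rnkF_one_le pth p₀ x c, rnkF_le pth p₀ hc⟩
  have heq : (childF pth x).image (rnkF pth p₀ x) = Finset.Icc 1 (childF pth x).card := by
    refine Finset.eq_of_subset_of_card_le hsub ?_
    rw [hcard, Nat.card_Icc]
    omega
  have hm : m ∈ (childF pth x).image (rnkF pth p₀ x) := by
    rw [heq, Finset.mem_Icc]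
    exact ⟨h1, h2⟩
  rw [Finset.mem_image] at hm
  obtain ⟨c, hc, hc2⟩ := hm
  exact ⟨c, hc, hc2⟩

lemma rnkF_next {x c : V} (hc : c ∈ childF pth x) (hnext : isNextF p₀ x c) :
    rnkF pth p₀ x c = (childF pth x).card := by
  classical
  have hfilter : (childF pth x).filter (fun c' => keyF p₀ x c' < keyF p₀ x c) =
      (childF pth x).erase c := by
    ext z
    rw [Finset.mem_filter, Finset.mem_erase]
    have hkc : keyF p₀ x c = Fintype.card V := if_pos hnext
    constructor
    · rintro ⟨hz, hlt⟩
      refine ⟨fun hzc => ?_, hz⟩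
      subst hzc
      exact absurd hlt (lt_irrefl _)
    · rintro ⟨hzc, hz⟩
      refine ⟨hz, ?_⟩
      have hkz : keyF p₀ x z = (Fintype.equivFin V z : ℕ) := by
        rw [keyF, if_neg]
        intro hn
        exact hzc (nextF_uniq p₀ hp₀ hn hnext)
      rw [hkz, hkc]
      exact (Fintype.equivFin V z).isLt
  rw [rnkF, hfilter, Finset.card_erase_of_mem hc]
  have : 1 ≤ (childF pth x).card := Finset.card_pos.2 ⟨c, hc⟩
  omega

end RankLemmas

section PsiLemmas

variable (hpth : ∀ x, (pth x).IsPath)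
variable (huniq : ∀ (x : V) (q : H.Walk u x), q.IsPath → q = pth x)
include hpth huniq

lemma psiF_self : psiF pth p₀ u = 0 := by
  rw [psiF, pth_self pth hpth huniq]
  rfl

lemma psiF_step {c : V} (hc : c ≠ u) :
    psiF pth p₀ c = psiF pth p₀ (parF pth c) + rnkF pth p₀ (parF pth c) c := by
  obtain ⟨h, heq, hdep⟩ := parK pth hpth huniq hc
  rw [psiF, psiF]
  conv_lhs => rw [heq]
  rw [Walk.support_concat,
    List.tail_append_of_ne_nil (Walk.support_ne_nil _), List.map_append, List.sum_append]
  simp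

lemma psiF_pos {c : V} (hc : c ≠ u) : 1 ≤ psiF pth p₀ c := by
  rw [psiF_step pth p₀ hpth huniq hc]
  have := rnkF_one_le pth p₀ (parF pth c) c
  omega

end PsiLemmas

end Constr2

lemma arcSet_isCyclicInterval {t a l : ℕ} (ht : 0 < t) (hl1 : 1 ≤ l) (hlt : l ≤ t) :
    IsCyclicInterval t (arcSet t a l) := by
  have hmm : a % t < t := Nat.mod_lt _ ht
  rcases le_or_gt (a % t + l) t with hcase | hcase
  · refine ⟨1 + a % t, ⟨by omega, by omega⟩, a % t + l, ⟨by omega, by omega⟩, Or.inl ?_⟩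
    have hminmax : min (1 + a % t) (a % t + l) = 1 + a % t ∧
        max (1 + a % t) (a % t + l) = a % t + l := by omega
    rw [hminmax.1, hminmax.2]
    ext c
    rw [mem_arcSet ht hlt, Set.mem_Icc]
    by_cases hc : 1 ≤ c ∧ c ≤ t
    · unfold off
      rcases mod2 (c - 1 + (t - a % t)) ht (by omega) with h1 | h1 <;> omega
    · constructor <;> (intro h; omega)
  · refine ⟨a % t + l - t, ⟨by omega, by omega⟩, 1 + a % t, ⟨by omega, by omega⟩, Or.inr ?_⟩
    ext c
    rw [mem_arcSet ht hlt]
    simp only [Set.mem_diff, Set.mem_Icc, Set.mem_insert_iff, Set.mem_singleton_iff]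
    by_cases hc : 1 ≤ c ∧ c ≤ t
    · unfold off
      rcases mod2 (c - 1 + (t - a % t)) ht (by omega) with h1 | h1 <;> omega
    · constructor <;> (intro h; omega)

section Counting

open SimpleGraph Walk

lemma support_eq_map_range {V : Type*} {G : SimpleGraph V} {a b : V} (p : G.Walk a b) :
    p.support = (List.range (p.length + 1)).map p.getVert := by
  induction p with
  | nil => simp [List.range_succ]
  | @cons a b c h q ih =>
    rw [Walk.support_cons, ih, Walk.length_cons]
    conv_rhs => rw [List.range_succ_eq_map]
    rw [List.map_cons, List.map_map]
    rfl

lemma sum_list_range (f : ℕ → ℕ) (n : ℕ) :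
    ((List.range n).map f).sum = ∑ i ∈ Finset.range n, f i := by
  induction n with
  | zero => simp
  | succ n ih =>
    rw [List.range_succ, List.map_append, List.sum_append, Finset.sum_range_succ, ih]
    simp

lemma ncard_incidenceSet {V : Type*} [Fintype V] [DecidableEq V] (G : SimpleGraph V)
    [DecidableRel G.Adj] (x : V) : (G.incidenceSet x).ncard = G.degree x := by
  have h1 : G.incidenceSet x = ↑(G.incidenceFinset x) := by
    ext e
    rw [Finset.mem_coe, SimpleGraph.mem_incidenceFinset]
  rw [h1, Set.ncard_coe_finset, card_incidenceFinset_eq_degree]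

lemma incUnion_cons {V : Type*} {G : SimpleGraph V} {a b c : V} (h : G.Adj a b)
    (q : G.Walk b c) :
    (⋃ x ∈ (Walk.cons h q).support, G.incidenceSet x) =
      G.incidenceSet a ∪ ⋃ x ∈ q.support, G.incidenceSet x := by
  ext e
  simp only [Set.mem_iUnion, Walk.support_cons, List.mem_cons, Set.mem_union]
  constructor
  · rintro ⟨x, ⟨rfl | hx, hc⟩⟩
    · exact Or.inl hc
    · exact Or.inr ⟨x, hx, hc⟩
  · rintro (hc | ⟨x, hx, hc⟩)
    · exact ⟨a, Or.inl rfl, hc⟩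
    · exact ⟨x, Or.inr hx, hc⟩

lemma edge_bound {V : Type*} [Fintype V] [DecidableEq V] (G : SimpleGraph V)
    [DecidableRel G.Adj] {a b : V} (p : G.Walk a b) :
    (⋃ x ∈ p.support, G.incidenceSet x).ncard + p.length ≤
      (p.support.map (fun x => G.degree x)).sum := by
  induction p with
  | nil =>
    rename_i d
    have h1 : (⋃ x ∈ (Walk.nil : G.Walk d d).support, G.incidenceSet x) =
        G.incidenceSet d := by
      ext e
      simp
    rw [h1, ncard_incidenceSet]
    simp
  | @cons a b c h q ih =>
    rw [incUnion_cons]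
    have hunion := Set.ncard_union_add_ncard_inter (G.incidenceSet a)
      (⋃ x ∈ q.support, G.incidenceSet x) (Set.toFinite _) (Set.toFinite _)
    have hne : 1 ≤ (G.incidenceSet a ∩ ⋃ x ∈ q.support, G.incidenceSet x).ncard := by
      rw [Nat.one_le_iff_ne_zero, ← Nat.pos_iff_ne_zero, Set.ncard_pos (Set.toFinite _)]
      exact ⟨s(a, b), ⟨h, Sym2.mem_mk_left _ _⟩,
        Set.mem_biUnion q.start_mem_support ⟨h, Sym2.mem_mk_right _ _⟩⟩
    rw [Walk.support_cons, List.map_cons, List.sum_cons, Walk.length_cons]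
    have hdeg : (G.incidenceSet a).ncard = G.degree a := ncard_incidenceSet G a
    omega

lemma edges_in_incUnion {V : Type*} {G : SimpleGraph V} {a b : V} (p : G.Walk a b) :
    ∀ e ∈ p.edges, e ∈ ⋃ x ∈ p.support, G.incidenceSet x := by
  induction p with
  | nil => intro e he; simp at he
  | @cons a b c h q ih =>
    intro e he
    rw [Walk.edges_cons, List.mem_cons] at he
    rw [incUnion_cons]
    rcases he with rfl | he
    · exact Or.inl ⟨h, Sym2.mem_mk_left _ _⟩
    · exact Or.inr (ih e he)

lemma pathTP_subset {V : Type*} (H : SimpleGraph V) {a b : V} (p : H.Walk a b) :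
    pathTP H p ⊆ ⋃ x ∈ p.support, H.incidenceSet x := by
  rw [pathTP]
  split_ifs with hlen
  · intro e he
    exact edges_in_incUnion p e he
  · intro e he
    simp only [Set.mem_iUnion] at he ⊢
    obtain ⟨x, hx, he⟩ := he
    exact ⟨x, hx.1, he⟩

end Counting

section Sufficiency

open SimpleGraph Walk

variable {V : Type*} [Fintype V] [DecidableEq V]

theorem sufficiency (H : SimpleGraph V) [DecidableRel H.Adj]
    (hH : H.IsTree) (hE : H.edgeSet.Nonempty) {t : ℕ}
    (hΔ : H.maxDegree ≤ t) (htM : t ≤ treeM H) :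
    ∃ φ, IsCyclicIntervalColoring H t φ := by
  classical
  have hconn := hH.isConnected
  have hac := hH.IsAcyclic
  have hadj : ∀ x : V, ∃ y, H.Adj x y := exists_adj_of_connected hconn hE
  have ht : 0 < t := by
    obtain ⟨e, he⟩ := hE
    obtain ⟨⟨y, z⟩, rfl⟩ : ∃ yz : V × V, s(yz.1, yz.2) = e := ⟨e.out, e.out_eq⟩
    have h1 : 0 < H.degree y := H.degree_pos_iff_exists_adj y |>.2
      ⟨z, (H.mem_edgeSet).1 he⟩
    have h2 := H.degree_le_maxDegree y
    omega
  have hSne : {n | ∃ (u v : V) (p : H.Walk u v), p.IsPath ∧ (pathTP H p).ncard = n}.Nonempty := by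
    obtain ⟨e, -⟩ := hE
    exact ⟨_, e.out.1, e.out.1, Walk.nil, Walk.IsPath.nil, rfl⟩
  have hbdd : BddAbove {n | ∃ (u v : V) (p : H.Walk u v), p.IsPath ∧ (pathTP H p).ncard = n} := by
    refine ⟨(Set.univ : Set (Sym2 V)).ncard, ?_⟩
    rintro n ⟨u, v, p, hp, rfl⟩
    exact Set.ncard_le_ncard (Set.subset_univ _) (Set.toFinite _)
  obtain ⟨u, v₀, p₀, hp₀, hTP⟩ := Nat.sSup_mem hSne hbdd
  have htn : t ≤ (pathTP H p₀).ncard := by rw [hTP]; exact htM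
  choose pth hpth huniq using fun x => hH.existsUnique_path u x
  have hdegt : ∀ x, H.degree x ≤ t := fun x => le_trans (H.degree_le_maxDegree x) hΔ
  have hnotu : ∀ x, depF pth x ≠ 0 → x ≠ u := fun x h => ne_root_of_depF pth hpth huniq h
  have hdep1 : ∀ x : V, x ≠ u → 1 ≤ depF pth x := by
    intro x hx
    obtain ⟨-, -, hdep⟩ := parK pth hpth huniq hx
    omega
  -- the chain along p₀
  have hchain : ∀ i, i ≤ p₀.length → depF pth (p₀.getVert i) = i ∧
      (1 ≤ i → parF pth (p₀.getVert i) = p₀.getVert (i - 1)) := by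
    intro i
    induction i with
    | zero =>
      intro _
      rw [Walk.getVert_zero]
      exact ⟨depF_self pth hpth huniq, by omega⟩
    | succ i ih =>
      intro hi
      obtain ⟨ihd, ihp⟩ := ih (by omega)
      have hadj' : H.Adj (p₀.getVert i) (p₀.getVert (i + 1)) := p₀.adj_getVert_succ (by omega)
      rcases adjK pth hac hpth huniq hadj' with h1 | h1
      · refine ⟨by omega, fun _ => ?_⟩
        rw [h1.1]
        simp
      · exfalso
        rcases Nat.eq_zero_or_pos i with rfl | hipos
        · omega
        · have hpar := ihp hipos
          have heq2 : p₀.getVert (i + 1) = p₀.getVert (i - 1) := by rw [← h1.1, hpar]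
          have := getVert_inj hp₀ (i := i + 1) (j := i - 1) (by omega) (by omega) heq2
          omega
  have hchild : ∀ i, i < p₀.length → p₀.getVert (i + 1) ∈ childF pth (p₀.getVert i) := by
    intro i hi
    rw [mem_childF]
    exact ⟨p₀.adj_getVert_succ hi,
      by rw [(hchain (i + 1) (by omega)).1, (hchain i (by omega)).1]⟩
  have hψchain : ∀ i, i < p₀.length → psiF pth p₀ (p₀.getVert (i + 1)) =
      psiF pth p₀ (p₀.getVert i) + (childF pth (p₀.getVert i)).card := by
    intro i hi
    have hne : p₀.getVert (i + 1) ≠ u := hnotu _ (by rw [(hchain (i + 1) (by omega)).1]; omega)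
    have hpar : parF pth (p₀.getVert (i + 1)) = p₀.getVert i := by
      have h2 := (hchain (i + 1) (by omega)).2 (by omega)
      simpa using h2
    rw [psiF_step pth p₀ hpth huniq hne, hpar,
      rnkF_next pth p₀ hp₀ (hchild i hi) ⟨i, hi, rfl, rfl⟩]
  have hsurjc : ∀ i, i ≤ p₀.length → ∀ m, 1 ≤ m →
      m ≤ psiF pth p₀ (p₀.getVert i) + (childF pth (p₀.getVert i)).card →
      ∃ c, c ≠ u ∧ psiF pth p₀ c = m := by
    intro i
    induction i with
    | zero =>
      intro _ m h1 h2
      rw [Walk.getVert_zero, psiF_self pth p₀ hpth huniq] at h2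
      obtain ⟨c, hc, hrnk⟩ := rnkF_surj pth p₀ hp₀ (x := u) h1 (by omega)
      have hcne : c ≠ u := by
        rw [mem_childF] at hc
        refine hnotu c ?_
        rw [hc.2, depF_self pth hpth huniq]
        omega
      refine ⟨c, hcne, ?_⟩
      rw [psiF_step pth p₀ hpth huniq hcne, parF_of_child pth hac hpth huniq hc,
        psiF_self pth p₀ hpth huniq, hrnk]
      omega
    | succ i ih =>
      intro hi m h1 h2
      rcases le_or_gt m (psiF pth p₀ (p₀.getVert i) + (childF pth (p₀.getVert i)).card)
        with hle | hgt
      · exact ih (by omega) m h1 hle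
      · have hψ := hψchain i (by omega)
        obtain ⟨c, hc, hrnk⟩ := rnkF_surj pth p₀ hp₀ (x := p₀.getVert (i + 1))
          (m := m - psiF pth p₀ (p₀.getVert (i + 1))) (by omega) (by omega)
        have hcne : c ≠ u := by
          rw [mem_childF] at hc
          refine hnotu c ?_
          rw [hc.2, (hchain (i + 1) (by omega)).1]
          omega
        refine ⟨c, hcne, ?_⟩
        rw [psiF_step pth p₀ hpth huniq hcne, parF_of_child pth hac hpth huniq hc, hrnk]
        omega
  have hL : t ≤ psiF pth p₀ (p₀.getVert p₀.length) +
      (childF pth (p₀.getVert p₀.length)).card := by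
    have hsum : ∀ i, i ≤ p₀.length →
        psiF pth p₀ (p₀.getVert i) + (childF pth (p₀.getVert i)).card + i =
          ∑ j ∈ Finset.range (i + 1), H.degree (p₀.getVert j) := by
      intro i
      induction i with
      | zero =>
        intro _
        rw [Finset.sum_range_one, Walk.getVert_zero, psiF_self pth p₀ hpth huniq]
        have := (degree_eq pth hpth huniq hac (x := u)).1 rfl
        omega
      | succ i ih =>
        intro hi
        rw [Finset.sum_range_succ, ← ih (by omega), hψchain i (by omega)]
        have hne : p₀.getVert (i + 1) ≠ u :=
          hnotu _ (by rw [(hchain (i + 1) (by omega)).1]; omega)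
        have := (degree_eq pth hpth huniq hac (x := p₀.getVert (i + 1))).2 hne
        omega
    have h1 := edge_bound H p₀
    have h2 : (p₀.support.map (fun x => H.degree x)).sum =
        ∑ j ∈ Finset.range (p₀.length + 1), H.degree (p₀.getVert j) := by
      rw [support_eq_map_range, List.map_map]
      exact sum_list_range _ _
    have h3 : (pathTP H p₀).ncard ≤ (⋃ x ∈ p₀.support, H.incidenceSet x).ncard :=
      Set.ncard_le_ncard (pathTP_subset H p₀) (Set.toFinite _)
    have h4 := hsum p₀.length le_rfl
    omega
  -- edge value lemmas
  have hedge_val : ∀ x z : V, z ∈ childF pth x →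
      phiF pth p₀ t s(x, z) = colF pth p₀ t z := by
    intro x z hz
    rw [mem_childF] at hz
    exact phiF_eval pth p₀ (by omega)
  have hedge_par : ∀ x : V, x ≠ u →
      phiF pth p₀ t s(x, parF pth x) = colF pth p₀ t x := by
    intro x hx
    obtain ⟨h, -, hdep⟩ := parK pth hpth huniq hx
    rw [Sym2.eq_swap]
    exact phiF_eval pth p₀ (by omega)
  have hroot_child : ∀ z : V, H.Adj u z → z ∈ childF pth u := by
    intro z hz
    rw [mem_childF]
    rcases adjK pth hac hpth huniq hz with h1 | h1
    · exact ⟨hz, h1.2⟩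
    · rw [depF_self pth hpth huniq] at h1
      omega
  have hcol_child : ∀ x z : V, z ∈ childF pth x → x ≠ u →
      colF pth p₀ t z = elt t (psiF pth p₀ x - 1) (rnkF pth p₀ x z) := by
    intro x z hz hxu
    have hzu : z ≠ u := by
      rw [mem_childF] at hz
      exact hnotu z (by have := hdep1 x hxu; omega)
    have hψz := psiF_step pth p₀ hpth huniq hzu
    rw [parF_of_child pth hac hpth huniq hz] at hψz
    have hψx := psiF_pos pth p₀ hpth huniq hxu
    rw [elt, colF, hψz]
    congr 2
    omega
  have hcol_child_root : ∀ z : V, z ∈ childF pth u →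
      colF pth p₀ t z = elt t 0 (rnkF pth p₀ u z - 1) := by
    intro z hz
    have hzu : z ≠ u := by
      rw [mem_childF] at hz
      exact hz.1.ne'
    have hψz := psiF_step pth p₀ hpth huniq hzu
    rw [parF_of_child pth hac hpth huniq hz, psiF_self pth p₀ hpth huniq] at hψz
    rw [elt, colF, hψz]
    congr 2
    omega
  have hcol_self : ∀ x : V, x ≠ u →
      colF pth p₀ t x = elt t (psiF pth p₀ x - 1) 0 := by
    intro x hx
    rw [elt, colF]
    congr 2
  -- value of φ on an edge at x, with the offset specification
  have hval : ∀ x z : V, H.Adj x z → ∃ j : ℕ, j < H.degree x ∧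
      phiF pth p₀ t s(x, z) = elt t (if x = u then 0 else psiF pth p₀ x - 1) j ∧
      ((x = u ∧ j + 1 = rnkF pth p₀ x z) ∨
        (x ≠ u ∧ z = parF pth x ∧ j = 0) ∨
        (x ≠ u ∧ z ∈ childF pth x ∧ j = rnkF pth p₀ x z)) := by
    intro x z hz
    by_cases hxu : x = u
    · subst hxu
      have hzc := hroot_child z hz
      have hdeg := (degree_eq pth hpth huniq hac (x := x)).1 rfl
      refine ⟨rnkF pth p₀ x z - 1, ?_, ?_, Or.inl ⟨rfl, ?_⟩⟩
      · have := rnkF_le pth p₀ hzc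
        have := rnkF_one_le pth p₀ x z
        omega
      · rw [if_pos rfl, hedge_val x z hzc, hcol_child_root z hzc]
      · have := rnkF_one_le pth p₀ x z
        omega
    · have hdeg := (degree_eq pth hpth huniq hac (x := x)).2 hxu
      rcases adjK pth hac hpth huniq hz with h1 | h1
      · have hzc : z ∈ childF pth x := (mem_childF pth).2 ⟨hz, h1.2⟩
        refine ⟨rnkF pth p₀ x z, ?_, ?_, Or.inr (Or.inr ⟨hxu, hzc, rfl⟩)⟩
        · have := rnkF_le pth p₀ hzc
          omega
        · rw [if_neg hxu, hedge_val x z hzc, hcol_child x z hzc hxu]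
      · have hzp : z = parF pth x := h1.1.symm
        refine ⟨0, by omega, ?_, Or.inr (Or.inl ⟨hxu, hzp, rfl⟩)⟩
        rw [if_neg hxu, hzp, hedge_par x hxu, hcol_self x hxu]
  -- parent is never a child
  have hpar_not_child : ∀ x : V, x ≠ u → parF pth x ∉ childF pth x := by
    intro x hx
    exact ((neighbor_partition pth hpth huniq hac).2 hx).2
  -- the image of the incidence set
  have hIMG : ∀ x : V, phiF pth p₀ t '' H.incidenceSet x =
      arcSet t (if x = u then 0 else psiF pth p₀ x - 1) (H.degree x) := by
    intro x
    ext c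
    constructor
    · rintro ⟨e, he, rfl⟩
      obtain ⟨z, hz, rfl⟩ := inc_elt he
      obtain ⟨j, hj1, hj2, -⟩ := hval x z hz
      exact ⟨j, hj1, hj2.symm⟩
    · rintro ⟨j, hj, rfl⟩
      rw [Set.mem_Iio] at hj
      by_cases hxu : x = u
      · subst hxu
        have hdeg := (degree_eq pth hpth huniq hac (x := x)).1 rfl
        obtain ⟨z, hz, hrnk⟩ := rnkF_surj pth p₀ hp₀ (x := x) (m := j + 1) (by omega) (by omega)
        have hadjz : H.Adj x z := ((mem_childF pth).1 hz).1
        refine ⟨s(x, z), ⟨hadjz, Sym2.mem_mk_left _ _⟩, ?_⟩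
        obtain ⟨j', hj1', hj2', hspec⟩ := hval x z hadjz
        rw [hj2']
        congr 1
        rcases hspec with ⟨-, hs⟩ | ⟨hs, -⟩ | ⟨hs, -⟩
        · omega
        · exact absurd rfl hs
        · exact absurd rfl hs
      · have hdeg := (degree_eq pth hpth huniq hac (x := x)).2 hxu
        rcases Nat.eq_zero_or_pos j with rfl | hjpos
        · obtain ⟨hadm, -, -⟩ := parK pth hpth huniq hxu
          refine ⟨s(x, parF pth x), ⟨hadm.symm, Sym2.mem_mk_left _ _⟩, ?_⟩
          rw [hedge_par x hxu, hcol_self x hxu, if_neg hxu]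
        · obtain ⟨z, hz, hrnk⟩ := rnkF_surj pth p₀ hp₀ (x := x) (m := j) (by omega) (by omega)
          have hadjz : H.Adj x z := ((mem_childF pth).1 hz).1
          refine ⟨s(x, z), ⟨hadjz, Sym2.mem_mk_left _ _⟩, ?_⟩
          rw [hedge_val x z hz, hcol_child x z hz hxu, hrnk, if_neg hxu]
  -- proper coloring conditions
  have hrange : ∀ e ∈ H.edgeSet, phiF pth p₀ t e ∈ Set.Icc 1 t := by
    intro e he
    obtain ⟨⟨y, z⟩, rfl⟩ : ∃ yz : V × V, s(yz.1, yz.2) = e := ⟨e.out, e.out_eq⟩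
    have hmem : phiF pth p₀ t s(y, z) ∈ phiF pth p₀ t '' H.incidenceSet y :=
      ⟨s(y, z), ⟨he, Sym2.mem_mk_left _ _⟩, rfl⟩
    rw [hIMG y] at hmem
    exact arcSet_subset ht _ _ hmem
  have hproper : ∀ e₁ ∈ H.edgeSet, ∀ e₂ ∈ H.edgeSet, e₁ ≠ e₂ →
      (∃ x, x ∈ e₁ ∧ x ∈ e₂) → phiF pth p₀ t e₁ ≠ phiF pth p₀ t e₂ := by
    rintro e₁ he₁ e₂ he₂ hne ⟨x, hx1, hx2⟩ heq
    obtain ⟨z₁, hz₁, rfl⟩ := inc_elt (⟨he₁, hx1⟩ : e₁ ∈ H.incidenceSet x)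
    obtain ⟨z₂, hz₂, rfl⟩ := inc_elt (⟨he₂, hx2⟩ : e₂ ∈ H.incidenceSet x)
    have hzne : z₁ ≠ z₂ := fun h => hne (by rw [h])
    obtain ⟨j₁, hj1, hval1, hspec1⟩ := hval x z₁ hz₁
    obtain ⟨j₂, hj2, hval2, hspec2⟩ := hval x z₂ hz₂
    rw [hval1, hval2] at heq
    have hjeq : j₁ = j₂ := elt_injOn ht _ (by have := hdegt x; omega)
      (by have := hdegt x; omega) heq
    subst hjeq
    rcases hspec1 with ⟨hxu, hs1⟩ | ⟨hxu, hs1, hs1'⟩ | ⟨hxu, hs1, hs1'⟩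
    · rcases hspec2 with ⟨-, hs2⟩ | ⟨hxu', -⟩ | ⟨hxu', -⟩
      · have hc1 := hroot_child z₁ (hxu ▸ hz₁)
        have hc2 := hroot_child z₂ (hxu ▸ hz₂)
        subst hxu
        exact hzne (rnkF_inj pth p₀ hp₀ hc1 hc2 (by omega))
      · exact hxu' hxu
      · exact hxu' hxu
    · rcases hspec2 with ⟨hxu', -⟩ | ⟨-, hs2, -⟩ | ⟨-, hs2, hs2'⟩
      · exact hxu hxu'
      · exact hzne (hs1.trans hs2.symm)
      · have := rnkF_one_le pth p₀ x z₂
        omega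
    · rcases hspec2 with ⟨hxu', -⟩ | ⟨-, hs2, hs2'⟩ | ⟨-, hs2, hs2'⟩
      · exact hxu hxu'
      · have := rnkF_one_le pth p₀ x z₁
        omega
      · exact hzne (rnkF_inj pth p₀ hp₀ hs1 hs2 (by omega))
  have hsurj : ∀ c ∈ Set.Icc 1 t, ∃ e ∈ H.edgeSet, phiF pth p₀ t e = c := by
    intro c hc
    rw [Set.mem_Icc] at hc
    obtain ⟨c', hc'ne, hψ⟩ := hsurjc p₀.length le_rfl c hc.1 (by omega)
    obtain ⟨hadm, -, -⟩ := parK pth hpth huniq hc'ne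
    refine ⟨s(c', parF pth c'), (H.mem_edgeSet).2 hadm.symm, ?_⟩
    rw [hedge_par c' hc'ne, colF, hψ, Nat.mod_eq_of_lt (by omega)]
    omega
  refine ⟨phiF pth p₀ t, ⟨hrange, hproper, hsurj⟩, ?_⟩
  intro x hne
  obtain ⟨e, he⟩ := hne
  obtain ⟨z, hz, -⟩ := inc_elt he
  have hdpos : 1 ≤ H.degree x := H.degree_pos_iff_exists_adj x |>.2 ⟨z, hz⟩
  rw [hIMG x]
  exact arcSet_isCyclicInterval ht hdpos (hdegt x)

end Sufficiency

end Stmt7Aux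

/-- For any tree `H`, `Θ(H) = [Δ(H), M(H)]`. -/
theorem stmt7 {V : Type*} [Fintype V] [DecidableEq V] (H : SimpleGraph V) [DecidableRel H.Adj]
    (hH : H.IsTree) (hE : H.edgeSet.Nonempty) :
    {t : ℕ | ∃ φ, IsCyclicIntervalColoring H t φ} = Set.Icc H.maxDegree (treeM H) := by
  ext t
  simp only [Set.mem_setOf_eq, Set.mem_Icc]
  constructor
  · rintro ⟨φ, hφ⟩
    exact Stmt7Aux.necessity H hH hE hφ
  · rintro ⟨h1, h2⟩
    exact Stmt7Aux.sufficiency H hH hE h1 h2
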